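/- arXiv:1506.03230 — 3 statements merged into one kernel-verified Lean document; each statement's English description precedes it below -/
import Mathlib

section
/- Let B = diag(q_1(z⁻¹)I_{n_1} + R_1 z⁻¹, …, q_m(z⁻¹)I_{n_m} + R_m z⁻¹) be an HTL normal form such that for each j = 1,…,m no two eigenvalues of R_j differ by a nonzero integer. Then ι⁻¹(O^tru_B) = O_B; i.e., a matrix A ∈ M(n, ℂ((z))) satisfies ι(A) ∈ O^tru_B if and only if A = X[B] for some X ∈ GL(n, ℂ[[z]]). -/
/-!
STATEMENT 1: for an HTL normal form `B` whose residue blocks `R_j` have no two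
eigenvalues differing by a nonzero integer, `ι⁻¹(O^tru_B) = O_B`.
-/

open Matrix BigOperators

noncomputable section

/-- Auxiliary: multiply the `k`-th coefficient by `k`. -/
def zmul (f : LaurentSeries ℂ) : LaurentSeries ℂ :=
  { coeff := fun k => (k : ℂ) * f.coeff k
    isPWO_support' := f.isPWO_support'.mono (by
      intro k hk
      simp only [Function.mem_support, ne_eq] at hk ⊢
      intro h
      exact hk (by rw [h, mul_zero])) }

/-- The formal derivative `d/dz` on `ℂ((z))`. -/
def zderiv (f : LaurentSeries ℂ) : LaurentSeries ℂ :=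
  HahnSeries.single (-1 : ℤ) (1 : ℂ) * zmul f

/-- Evaluation of a polynomial at `z⁻¹`. -/
def polyZinv (q : Polynomial ℂ) : LaurentSeries ℂ :=
  q.sum fun k c => HahnSeries.single (-(k : ℤ)) c

/-- A Laurent series lies in `ℂ[[z]]` (no polar part). -/
def Tame (f : LaurentSeries ℂ) : Prop := ∀ k : ℤ, k < 0 → f.coeff k = 0

/-- `GL(n, ℂ[[z]])`. -/
abbrev GLps (n : ℕ) := (Matrix (Fin n) (Fin n) (PowerSeries ℂ))ˣ

/-- The inclusion `GL(n, ℂ[[z]]) → GL(n, ℂ((z)))`. -/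
def glMap {n : ℕ} : GLps n →* (Matrix (Fin n) (Fin n) (LaurentSeries ℂ))ˣ :=
  Units.map ((HahnSeries.ofPowerSeries ℤ ℂ).mapMatrix).toMonoidHom

/-- The holomorphic gaugeT transform `X[B] := XBX⁻¹ + (dX/dz)X⁻¹` for
`X ∈ GL(n, ℂ[[z]])`. -/
def gaugeT {n : ℕ} (X : GLps n) (B : Matrix (Fin n) (Fin n) (LaurentSeries ℂ)) :
    Matrix (Fin n) (Fin n) (LaurentSeries ℂ) :=
  (glMap X).val * B * ((glMap X)⁻¹).val + ((glMap X).val.map zderiv) * ((glMap X)⁻¹).val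

/-- The data of an HTL normal form of size `n`:
`B = diag(q_1(z⁻¹)I_{n_1} + R_1 z⁻¹, …, q_m(z⁻¹)I_{n_m} + R_m z⁻¹)` with the `q_j`
pairwise distinct elements of `s²ℂ[s]` and `R_j ∈ M(n_j, ℂ)`. -/
structure HTLData (n : ℕ) where
  m : ℕ
  nb : Fin m → ℕ
  hn : ∑ j, nb j = n
  q : Fin m → Polynomial ℂ
  hq0 : ∀ j, (q j).coeff 0 = 0
  hq1 : ∀ j, (q j).coeff 1 = 0
  hqd : ∀ j j', j ≠ j' → q j ≠ q j'
  R : (j : Fin m) → Matrix (Fin (nb j)) (Fin (nb j)) ℂ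

namespace HTLData

variable {n : ℕ} (D : HTLData n)

/-- Identification of the disjoint union of the blocks with `Fin n`. -/
def sigmaEquiv : (Σ j : Fin D.m, Fin (D.nb j)) ≃ Fin n :=
  Fintype.equivFinOfCardEq (by simpa using D.hn)

/-- The matrix of the HTL normal form. -/
def mat : Matrix (Fin n) (Fin n) (LaurentSeries ℂ) :=
  Matrix.reindex D.sigmaEquiv D.sigmaEquiv
    (Matrix.blockDiagonal' fun j =>
      (fun a b => (if a = b then polyZinv (D.q j) else 0) +
        HahnSeries.single (-1 : ℤ) (D.R j a b)))

end HTLData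

section Aux
open Polynomial

@[simp] lemma zmul_coeff (f : LaurentSeries ℂ) (k : ℤ) : (zmul f).coeff k = (k : ℂ) * f.coeff k := rfl

lemma single_neg_one_mul_coeff (f : LaurentSeries ℂ) (c : ℂ) (t : ℤ) :
    (HahnSeries.single (-1 : ℤ) c * f).coeff t = c * f.coeff (t + 1) := by
  have := HahnSeries.coeff_single_mul_add (r := c) (x := f) (a := t + 1) (b := (-1 : ℤ))
  simpa using this

lemma zderiv_coeff (f : LaurentSeries ℂ) (t : ℤ) :
    (zderiv f).coeff t = ((t + 1 : ℤ) : ℂ) * f.coeff (t + 1) := by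
  rw [zderiv, single_neg_one_mul_coeff]
  simp

lemma zderiv_add (f g : LaurentSeries ℂ) : zderiv (f + g) = zderiv f + zderiv g := by
  ext t
  simp [zderiv_coeff, HahnSeries.coeff_add, mul_add]

lemma coeff_finsum {σ : Type*} (s : Finset σ) (F : σ → LaurentSeries ℂ) (a : ℤ) :
    (∑ i ∈ s, F i).coeff a = ∑ i ∈ s, (F i).coeff a := by
  classical
  induction s using Finset.cons_induction with
  | empty => simp
  | cons i s hi ih => rw [Finset.sum_cons, Finset.sum_cons, HahnSeries.coeff_add, ih]

lemma zmul_mul (f g : LaurentSeries ℂ) : zmul (f * g) = zmul f * g + f * zmul g := by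
  ext k
  have hfs : (zmul f).support ⊆ f.support := fun x hx => by
    rw [HahnSeries.mem_support] at hx ⊢
    intro h; exact hx (by rw [zmul_coeff, h, mul_zero])
  have hgs : (zmul g).support ⊆ g.support := fun x hx => by
    rw [HahnSeries.mem_support] at hx ⊢
    intro h; exact hx (by rw [zmul_coeff, h, mul_zero])
  rw [HahnSeries.coeff_add, zmul_coeff,
    HahnSeries.coeff_mul_left' f.isPWO_support hfs,
    HahnSeries.coeff_mul_right' g.isPWO_support hgs,
    HahnSeries.coeff_mul, Finset.mul_sum, ← Finset.sum_add_distrib]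
  apply Finset.sum_congr rfl
  intro ij hij
  rw [Finset.mem_addAntidiagonal] at hij
  obtain ⟨-, -, hsum⟩ := hij
  simp only [zmul_coeff]
  rw [← hsum]
  push_cast
  ring

lemma zderiv_mul (f g : LaurentSeries ℂ) :
    zderiv (f * g) = zderiv f * g + f * zderiv g := by
  unfold zderiv
  rw [zmul_mul, mul_add, mul_assoc]
  congr 1
  ring

lemma tame_iff (f : LaurentSeries ℂ) :
    Tame f ↔ ∃ g : PowerSeries ℂ, HahnSeries.ofPowerSeries ℤ ℂ g = f := by
  constructor
  · intro hf
    refine ⟨PowerSeries.mk fun n => f.coeff n, ?_⟩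
    ext k
    rcases k with n | n
    · rw [Int.ofNat_eq_coe, HahnSeries.ofPowerSeries_apply_coeff]
      simp
    · rw [hf _ (Int.negSucc_lt_zero n), HahnSeries.ofPowerSeries_apply,
        HahnSeries.embDomain_notin_range]
      rintro ⟨m, hm⟩
      simp only [Function.Embedding.coeFn_mk, RelEmbedding.coe_mk, Int.negSucc_eq, Nat.castOrderEmbedding_apply] at hm
      omega
  · rintro ⟨g, rfl⟩ k hk
    rw [HahnSeries.ofPowerSeries_apply, HahnSeries.embDomain_notin_range]
    rintro ⟨m, hm⟩
    simp only [Function.Embedding.coeFn_mk, RelEmbedding.coe_mk, Nat.castOrderEmbedding_apply] at hm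
    omega

lemma tame_zero : Tame 0 := fun _ _ => rfl
lemma tame_one : Tame 1 := (tame_iff 1).2 ⟨1, map_one _⟩
lemma tame_add {f g} (hf : Tame f) (hg : Tame g) : Tame (f + g) := by
  intro k hk; rw [HahnSeries.coeff_add, hf k hk, hg k hk, add_zero]
lemma tame_neg {f} (hf : Tame f) : Tame (-f) := by
  intro k hk; rw [HahnSeries.coeff_neg, hf k hk, neg_zero]
lemma tame_sub {f g} (hf : Tame f) (hg : Tame g) : Tame (f - g) := by
  rw [sub_eq_add_neg]; exact tame_add hf (tame_neg hg)
lemma tame_mul {f g} (hf : Tame f) (hg : Tame g) : Tame (f * g) := by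
  obtain ⟨a, rfl⟩ := (tame_iff f).1 hf
  obtain ⟨b, rfl⟩ := (tame_iff g).1 hg
  exact (tame_iff _).2 ⟨a * b, map_mul _ _ _⟩
lemma tame_sum {σ : Type*} (s : Finset σ) (F : σ → LaurentSeries ℂ)
    (h : ∀ i ∈ s, Tame (F i)) : Tame (∑ i ∈ s, F i) := by
  intro k hk
  rw [coeff_finsum]
  exact Finset.sum_eq_zero fun i hi => h i hi k hk
lemma tame_zderiv {f} (hf : Tame f) : Tame (zderiv f) := by
  intro k hk
  rw [zderiv_coeff]
  rcases lt_or_eq_of_le (by omega : k + 1 ≤ 0) with h | h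
  · rw [hf _ h, mul_zero]
  · rw [h]; simp

lemma tame_ofPowerSeries (g : PowerSeries ℂ) : Tame (HahnSeries.ofPowerSeries ℤ ℂ g) :=
  (tame_iff _).2 ⟨g, rfl⟩


lemma single_neg_mul_coeff (d : ℤ) (c : ℂ) (f : LaurentSeries ℂ) (t : ℤ) :
    (HahnSeries.single (-d) c * f).coeff t = c * f.coeff (t + d) := by
  have := HahnSeries.coeff_single_mul_add (r := c) (x := f) (a := t + d) (b := -d)
  simpa using this

lemma mul_single_neg_coeff (d : ℤ) (c : ℂ) (f : LaurentSeries ℂ) (t : ℤ) :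
    (f * HahnSeries.single (-d) c).coeff t = f.coeff (t + d) * c := by
  have := HahnSeries.coeff_mul_single_add (r := c) (x := f) (a := t + d) (b := -d)
  simpa using this

lemma polyZinv_mul_coeff (p : Polynomial ℂ) (f : LaurentSeries ℂ) (t : ℤ) (N : ℕ)
    (hN : p.natDegree < N) :
    (polyZinv p * f).coeff t = ∑ d ∈ Finset.range N, p.coeff d * f.coeff (t + d) := by
  have h1 : (polyZinv p * f).coeff t
      = ∑ d ∈ p.support, p.coeff d * f.coeff (t + d) := by
    rw [polyZinv, Polynomial.sum_def, Finset.sum_mul, coeff_finsum]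
    exact Finset.sum_congr rfl fun d _ => single_neg_mul_coeff d _ f t
  have h2 : p.sum (fun d c => c * f.coeff (t + d))
      = ∑ d ∈ Finset.range N, p.coeff d * f.coeff (t + d) :=
    Polynomial.sum_over_range' (f := fun d c => c * f.coeff (t + (d:ℤ))) p (fun n => zero_mul _) N hN
  rw [h1, ← h2, Polynomial.sum_def]

lemma mul_polyZinv_coeff (p : Polynomial ℂ) (f : LaurentSeries ℂ) (t : ℤ) (N : ℕ)
    (hN : p.natDegree < N) :
    (f * polyZinv p).coeff t = ∑ d ∈ Finset.range N, p.coeff d * f.coeff (t + d) := by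
  rw [mul_comm]; exact polyZinv_mul_coeff p f t N hN

lemma single_neg_one_mul_coeff' (c : ℂ) (f : LaurentSeries ℂ) (t : ℤ) :
    (HahnSeries.single (-1 : ℤ) c * f).coeff t = c * f.coeff (t + 1) := by
  simpa using single_neg_mul_coeff 1 c f t

lemma mul_single_neg_one_coeff' (c : ℂ) (f : LaurentSeries ℂ) (t : ℤ) :
    (f * HahnSeries.single (-1 : ℤ) c).coeff t = f.coeff (t + 1) * c := by
  simpa using mul_single_neg_coeff 1 c f t

lemma ofPowerSeries_coeff_neg (g : PowerSeries ℂ) (t : ℤ) (ht : t < 0) :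
    (HahnSeries.ofPowerSeries ℤ ℂ g).coeff t = 0 := by
  rw [HahnSeries.ofPowerSeries_apply, HahnSeries.embDomain_notin_range]
  rintro ⟨m, hm⟩
  simp only [Function.Embedding.coeFn_mk, RelEmbedding.coe_mk, Nat.castOrderEmbedding_apply] at hm
  omega

lemma degree_ge_two {p : Polynomial ℂ} (h0 : p.coeff 0 = 0) (h1 : p.coeff 1 = 0)
    (hne : p ≠ 0) : 2 ≤ p.natDegree := by
  by_contra h
  push_neg at h
  apply hne
  ext n
  rcases Nat.lt_or_ge n 2 with hn | hn
  · interval_cases n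
    · simpa using h0
    · simpa using h1
  · rw [Polynomial.coeff_eq_zero_of_natDegree_lt (by omega)]
    simp


variable {p : ℕ}



lemma root_charpoly_mem_spectrum (R : Matrix (Fin p) (Fin p) ℂ) (μ : ℂ)
    (h : (Matrix.charpoly R).IsRoot μ) : μ ∈ spectrum ℂ R := by
  rw [spectrum.mem_iff]
  intro hu
  rw [Matrix.isUnit_iff_isUnit_det] at hu
  have hdet : ((algebraMap ℂ (Matrix (Fin p) (Fin p) ℂ) μ - R)).det = 0 := by
    have hmap : (Polynomial.evalRingHom μ).mapMatrix (Matrix.charmatrix R) =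
        algebraMap ℂ (Matrix (Fin p) (Fin p) ℂ) μ - R := by
      ext i j
      simp [Matrix.charmatrix_apply, Matrix.algebraMap_matrix_apply, Matrix.diagonal,
        Matrix.sub_apply, Matrix.one_apply, apply_ite]
    have := (RingHom.map_det (Polynomial.evalRingHom μ) (Matrix.charmatrix R))
    rw [hmap] at this
    rw [← this]
    simpa [Matrix.charpoly] using h
  rw [hdet] at hu
  exact hu.ne_zero rfl

lemma isUnit_sub_smul_one (R : Matrix (Fin p) (Fin p) ℂ) (c : ℂ)
    (h : c ∉ spectrum ℂ R) : IsUnit (R - c • (1 : Matrix (Fin p) (Fin p) ℂ)) := by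
  rw [spectrum.mem_iff, not_not] at h
  have : R - c • (1 : Matrix (Fin p) (Fin p) ℂ) =
      -(algebraMap ℂ (Matrix (Fin p) (Fin p) ℂ) c - R) := by
    rw [Algebra.algebraMap_eq_smul_one]
    exact (neg_sub _ _).symm
  rw [this]
  exact h.neg

lemma list_prod_isUnit {M : Type*} [Monoid M] (l : List M)
    (h : ∀ x ∈ l, IsUnit x) : IsUnit l.prod := by
  induction l with
  | nil => simp
  | cons a l ih =>
    rw [List.prod_cons]
    exact (h a List.mem_cons_self).mul (ih fun x hx => h x (List.mem_cons_of_mem a hx))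

lemma aevalMk_isUnit (R : Matrix (Fin p) (Fin p) ℂ)
    (hev : ∀ a ∈ spectrum ℂ R, ∀ b ∈ spectrum ℂ R, ∀ N : ℤ, a - b = (N : ℂ) → N = 0)
    (k : ℕ) (hk : 1 ≤ k) :
    IsUnit (Polynomial.aeval (R + (k : ℂ) • 1) (Matrix.charpoly R)) := by
  have hmonic := Matrix.charpoly_monic R
  have hsplit : (Matrix.charpoly R) =
      (Multiset.map (fun a => X - C a) (Matrix.charpoly R).roots).prod :=
    (IsAlgClosed.splits _).eq_prod_roots_of_monic hmonic
  set M : Multiset (Polynomial ℂ) := Multiset.map (fun a => X - C a) (Matrix.charpoly R).roots with hM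
  have hlist : Matrix.charpoly R = M.toList.prod := by
    rw [Multiset.prod_toList, ← hsplit]
  rw [hlist, map_list_prod]
  apply list_prod_isUnit
  intro x hx
  rw [List.mem_map] at hx
  obtain ⟨y, hy, rfl⟩ := hx
  have hy' : y ∈ M := by rwa [← Multiset.mem_toList]
  rw [hM, Multiset.mem_map] at hy'
  obtain ⟨a, ha, rfl⟩ := hy'
  have haroot : (Matrix.charpoly R).IsRoot a := by
    have hne : Matrix.charpoly R ≠ 0 := hmonic.ne_zero
    exact (Polynomial.mem_roots hne).1 ha
  have haspec : a ∈ spectrum ℂ R := root_charpoly_mem_spectrum R a haroot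
  simp only [Function.comp_apply, map_sub, Polynomial.aeval_X, Polynomial.aeval_C]
  have heq : R + (k:ℂ) • 1 - algebraMap ℂ (Matrix (Fin p) (Fin p) ℂ) a
      = R - (a - (k:ℂ)) • (1 : Matrix (Fin p) (Fin p) ℂ) := by
    rw [Algebra.algebraMap_eq_smul_one, sub_smul]
    abel
  rw [heq]
  apply isUnit_sub_smul_one
  intro hmem
  have := hev a haspec (a - (k:ℂ)) hmem (k : ℤ) (by push_cast; ring)
  omega

/-- The Sylvester-type operator `(k : ℂ) • Y - (R * Y - Y * R)`. -/
def sylv (R : Matrix (Fin p) (Fin p) ℂ) (k : ℕ) :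
    Module.End ℂ (Matrix (Fin p) (Fin p) ℂ) :=
  (k : ℂ) • LinearMap.id - (LinearMap.mulLeft ℂ R - LinearMap.mulRight ℂ R)

lemma sylv_apply (R : Matrix (Fin p) (Fin p) ℂ) (k : ℕ) (Y : Matrix (Fin p) (Fin p) ℂ) :
    sylv R k Y = (k : ℂ) • Y - (R * Y - Y * R) := rfl

lemma sylv_bijective (R : Matrix (Fin p) (Fin p) ℂ)
    (hev : ∀ a ∈ spectrum ℂ R, ∀ b ∈ spectrum ℂ R, ∀ N : ℤ, a - b = (N : ℂ) → N = 0)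
    (k : ℕ) (hk : 1 ≤ k) : Function.Bijective (sylv R k) := by
  rw [Function.Bijective, ← LinearMap.injective_iff_surjective, and_self]
  rw [← LinearMap.ker_eq_bot, LinearMap.ker_eq_bot']
  intro Y hY
  rw [sylv_apply, sub_eq_zero] at hY
  -- R * Y = Y * (R + k • 1)
  have hkey : R * Y = Y * (R + (k:ℂ) • 1) := by
    rw [mul_add]
    have h2 : Y * ((k:ℂ) • (1:Matrix (Fin p) (Fin p) ℂ)) = (k:ℂ) • Y := by
      rw [mul_smul_comm, mul_one]
    rw [h2, hY]
    abel
  have hpow : ∀ n : ℕ, R ^ n * Y = Y * (R + (k:ℂ) • 1) ^ n := by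
    intro n
    induction n with
    | zero => simp
    | succ n ih =>
      rw [pow_succ', pow_succ', mul_assoc, ih, ← mul_assoc, hkey, mul_assoc]
  have haev : ∀ P : Polynomial ℂ, (Polynomial.aeval R P) * Y = Y * (Polynomial.aeval (R + (k:ℂ) • 1) P) := by
    intro P
    induction P using Polynomial.induction_on' with
    | add f g hf hg => rw [map_add, map_add, add_mul, mul_add, hf, hg]
    | monomial n a =>
      rw [Polynomial.aeval_monomial, Polynomial.aeval_monomial,
        Algebra.algebraMap_eq_smul_one]
      simp only [smul_mul_assoc, one_mul, mul_smul_comm]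
      rw [hpow n]
  have h0 : Y * (Polynomial.aeval (R + (k:ℂ) • 1) (Matrix.charpoly R)) = 0 := by
    rw [← haev, Matrix.aeval_self_charpoly, zero_mul]
  obtain ⟨u, hu⟩ := aevalMk_isUnit R hev k hk
  rw [← hu] at h0
  calc Y = Y * (↑u * ↑u⁻¹) := by rw [Units.mul_inv, mul_one]
  _ = (Y * ↑u) * ↑u⁻¹ := by rw [mul_assoc]
  _ = 0 := by rw [h0, zero_mul]

/-- The inverse of the Sylvester operator, as a linear equiv. -/
def sylvEquiv (R : Matrix (Fin p) (Fin p) ℂ)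
    (hev : ∀ a ∈ spectrum ℂ R, ∀ b ∈ spectrum ℂ R, ∀ N : ℤ, a - b = (N : ℂ) → N = 0)
    (k : ℕ) (hk : 1 ≤ k) :
    Matrix (Fin p) (Fin p) ℂ ≃ₗ[ℂ] Matrix (Fin p) (Fin p) ℂ :=
  LinearEquiv.ofBijective (sylv R k) (sylv_bijective R hev k hk)


end Aux

section Core
open Polynomial

variable {m : ℕ} (nb : Fin m → ℕ) (q : Fin m → Polynomial ℂ)
  (R : (j : Fin m) → Matrix (Fin (nb j)) (Fin (nb j)) ℂ)

/-- Index type for the blocks. -/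
abbrev BIdx (nb : Fin m → ℕ) := (j : Fin m) × Fin (nb j)

/-- The normal-form matrix over the sigma index type. -/
def BmatI : Matrix (BIdx nb) (BIdx nb) (LaurentSeries ℂ) :=
  Matrix.blockDiagonal' fun j =>
    (fun a b => (if a = b then polyZinv (q j) else 0) +
      HahnSeries.single (-1 : ℤ) (R j a b))

/-- The residue matrix. -/
def RcI : Matrix (BIdx nb) (BIdx nb) ℂ := Matrix.blockDiagonal' R

def PqI : BIdx nb → LaurentSeries ℂ := fun i => polyZinv (q i.1)

def DqI : ℕ := Finset.univ.sup fun j => (q j).natDegree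

lemma natDegree_lt_DqI (j : Fin m) : (q j).natDegree < DqI q + 1 := by
  unfold DqI
  exact Nat.lt_succ_of_le (Finset.le_sup (f := fun j => (q j).natDegree) (Finset.mem_univ j))

lemma natDegree_sub_lt_DqI (j j' : Fin m) : (q j - q j').natDegree < DqI q + 1 := by
  have := Polynomial.natDegree_sub_le (q j) (q j')
  have h1 := natDegree_lt_DqI q j
  have h2 := natDegree_lt_DqI q j'
  omega

lemma BmatI_eq :
    BmatI nb q R = Matrix.diagonal (PqI nb q)
      + (RcI nb R).map (fun r => HahnSeries.single (-1 : ℤ) r) := by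
  ext i i' : 1
  obtain ⟨j, a⟩ := i
  obtain ⟨j', b⟩ := i'
  by_cases h : j = j'
  · subst h
    erw [BmatI, Matrix.blockDiagonal'_apply_eq]
    rw [Matrix.add_apply, Matrix.map_apply,
      RcI, Matrix.blockDiagonal'_apply_eq, Matrix.diagonal_apply]
    congr 1
    by_cases hab : a = b
    · subst hab; simp [PqI]
    · rw [if_neg hab, if_neg (by simp [hab])]
  · erw [BmatI, Matrix.blockDiagonal'_apply_ne _ _ _ h]
    rw [Matrix.add_apply, Matrix.map_apply,
      RcI, Matrix.blockDiagonal'_apply_ne _ _ _ h, Matrix.diagonal_apply,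
      if_neg (by simp [h])]
    simp

def d0I (j j' : Fin m) : ℕ := (q j - q j').natDegree
def lcI (j j' : Fin m) : ℂ := (q j - q j').leadingCoeff

lemma qsub_ne (hqd : ∀ j j', j ≠ j' → q j ≠ q j') (j j' : Fin m) (h : j ≠ j') :
    q j - q j' ≠ 0 :=
  sub_ne_zero.2 (hqd j j' h)

lemma d0I_ge_two (hq0 : ∀ j, (q j).coeff 0 = 0) (hq1 : ∀ j, (q j).coeff 1 = 0)
    (hqd : ∀ j j', j ≠ j' → q j ≠ q j') (j j' : Fin m) (h : j ≠ j') : 2 ≤ d0I q j j' := by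
  apply degree_ge_two
  · rw [Polynomial.coeff_sub, hq0, hq0, sub_zero]
  · rw [Polynomial.coeff_sub, hq1, hq1, sub_zero]
  · exact qsub_ne q hqd j j' h

lemma lcI_ne_zero (hqd : ∀ j j', j ≠ j' → q j ≠ q j') (j j' : Fin m) (h : j ≠ j') :
    lcI q j j' ≠ 0 :=
  Polynomial.leadingCoeff_ne_zero.2 (qsub_ne q hqd j j' h)

-- block extraction
def blkI (j : Fin m) (M : Matrix (BIdx nb) (BIdx nb) ℂ) :
    Matrix (Fin (nb j)) (Fin (nb j)) ℂ := fun a b => M ⟨j, a⟩ ⟨j, b⟩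

lemma RcI_mul_apply (M : Matrix (BIdx nb) (BIdx nb) ℂ) (j : Fin m) (a : Fin (nb j))
    (i' : BIdx nb) :
    (RcI nb R * M) ⟨j, a⟩ i' = ∑ a'', R j a a'' * M ⟨j, a''⟩ i' := by
  rw [Matrix.mul_apply, ← Finset.univ_sigma_univ, Finset.sum_sigma]
  rw [Finset.sum_eq_single_of_mem j (Finset.mem_univ j)]
  · apply Finset.sum_congr rfl
    intro a'' _
    rw [RcI, Matrix.blockDiagonal'_apply_eq]
  · intro j'' _ hj
    apply Finset.sum_eq_zero
    intro a'' _
    rw [RcI, Matrix.blockDiagonal'_apply_ne _ _ _ (Ne.symm hj), zero_mul]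

lemma mul_RcI_apply (M : Matrix (BIdx nb) (BIdx nb) ℂ) (i : BIdx nb) (j' : Fin m)
    (b : Fin (nb j')) :
    (M * RcI nb R) i ⟨j', b⟩ = ∑ b'', M i ⟨j', b''⟩ * R j' b'' b := by
  rw [Matrix.mul_apply, ← Finset.univ_sigma_univ, Finset.sum_sigma]
  rw [Finset.sum_eq_single_of_mem j' (Finset.mem_univ j')]
  · apply Finset.sum_congr rfl
    intro b'' _
    rw [RcI, Matrix.blockDiagonal'_apply_eq]
  · intro j'' _ hj
    apply Finset.sum_eq_zero
    intro b'' _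
    rw [RcI, Matrix.blockDiagonal'_apply_ne _ _ _ hj, mul_zero]

end Core

section Core2
open Polynomial

variable {m : ℕ} {nb : Fin m → ℕ} {q : Fin m → Polynomial ℂ}
  {R : (j : Fin m) → Matrix (Fin (nb j)) (Fin (nb j)) ℂ}
variable (hev : ∀ j : Fin m, ∀ a ∈ spectrum ℂ (R j), ∀ b ∈ spectrum ℂ (R j),
    ∀ N : ℤ, a - b = (N : ℂ) → N = 0)
variable (q)

def tauF (tc g : ℕ → Matrix (BIdx nb) (BIdx nb) ℂ) (k : ℕ) :
    Matrix (BIdx nb) (BIdx nb) ℂ :=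
  ∑ u ∈ Finset.range (k+1), tc u * g (k - u)

def ZofF (g : ℕ → Matrix (BIdx nb) (BIdx nb) ℂ) : ℤ → Matrix (BIdx nb) (BIdx nb) ℂ :=
  fun s => if 0 ≤ s then g s.toNat else 0

variable (R) in
def offF (tc g : ℕ → Matrix (BIdx nb) (BIdx nb) ℂ) (k : ℕ) :
    Matrix (BIdx nb) (BIdx nb) ℂ :=
  fun i i' =>
    if i.1 = i'.1 then 0 else
      (lcI q i.1 i'.1)⁻¹ *
        ((((k : ℤ) + 2 - (d0I q i.1 i'.1) : ℤ) : ℂ)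
            * ZofF g ((k : ℤ) + 2 - d0I q i.1 i'.1) i i'
         - (∑ d ∈ Finset.range (d0I q i.1 i'.1),
             (q i.1 - q i'.1).coeff d * ZofF g ((k : ℤ) + 1 - d0I q i.1 i'.1 + d) i i')
         - ((RcI nb R * ZofF g ((k : ℤ) + 2 - d0I q i.1 i'.1)) i i'
            - (ZofF g ((k : ℤ) + 2 - d0I q i.1 i'.1) * RcI nb R) i i')
         - (if 0 ≤ (k : ℤ) + 1 - d0I q i.1 i'.1
             then tauF tc g ((k : ℤ) + 1 - (d0I q i.1 i'.1 : ℤ)).toNat i i' else 0))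

def stepRaw (tc g : ℕ → Matrix (BIdx nb) (BIdx nb) ℂ) (k : ℕ) :
    Matrix (BIdx nb) (BIdx nb) ℂ :=
  Matrix.blockDiagonal' (fun j =>
    (sylvEquiv (R j) (hev j) (k+1) (by omega)).symm (blkI nb j (tauF tc g k)))
  + offF q R tc g k

def stepF (tc g : ℕ → Matrix (BIdx nb) (BIdx nb) ℂ) (k : ℕ) :
    Matrix (BIdx nb) (BIdx nb) ℂ :=
  stepRaw q hev tc (fun m' => g (min m' k)) k

def CCF (tc : ℕ → Matrix (BIdx nb) (BIdx nb) ℂ) : ℕ → ℕ → Matrix (BIdx nb) (BIdx nb) ℂ :=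
  Nat.rec (fun _ => 1)
    (fun k prev => fun m' => if m' ≤ k then prev m' else stepF q hev tc prev k)

def CF (tc : ℕ → Matrix (BIdx nb) (BIdx nb) ℂ) (k : ℕ) : Matrix (BIdx nb) (BIdx nb) ℂ :=
  CCF q hev tc k k

def ZF (tc : ℕ → Matrix (BIdx nb) (BIdx nb) ℂ) : ℤ → Matrix (BIdx nb) (BIdx nb) ℂ :=
  ZofF (CF q hev tc)

def tauCF (tc : ℕ → Matrix (BIdx nb) (BIdx nb) ℂ) (k : ℕ) : Matrix (BIdx nb) (BIdx nb) ℂ :=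
  tauF tc (CF q hev tc) k

lemma CCF_succ (tc : ℕ → Matrix (BIdx nb) (BIdx nb) ℂ) (k m' : ℕ) :
    CCF q hev tc (k+1) m' = if m' ≤ k then CCF q hev tc k m' else stepF q hev tc (CCF q hev tc k) k :=
  rfl

lemma CCF_eq_CF (tc : ℕ → Matrix (BIdx nb) (BIdx nb) ℂ) :
    ∀ k m', m' ≤ k → CCF q hev tc k m' = CF q hev tc m' := by
  intro k
  induction k with
  | zero => intro m' h; interval_cases m'; rfl
  | succ k ih =>
    intro m' h
    by_cases hm : m' ≤ k
    · rw [CCF_succ, if_pos hm, ih m' hm]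
    · have : m' = k + 1 := by omega
      subst this
      rfl

lemma CF_zero (tc : ℕ → Matrix (BIdx nb) (BIdx nb) ℂ) : CF q hev tc 0 = 1 := rfl

lemma CF_succ (tc : ℕ → Matrix (BIdx nb) (BIdx nb) ℂ) (k : ℕ) :
    CF q hev tc (k+1) = stepRaw q hev tc (fun m' => CF q hev tc (min m' k)) k := by
  show CCF q hev tc (k+1) (k+1) = _
  rw [CCF_succ, if_neg (by omega)]
  have h : (fun m' => CCF q hev tc k (min m' k)) = (fun m' => CF q hev tc (min m' k)) :=
    funext fun m' => CCF_eq_CF q hev tc k (min m' k) (min_le_right _ _)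
  rw [stepF, h]

lemma ZF_ofNat (tc : ℕ → Matrix (BIdx nb) (BIdx nb) ℂ) (k : ℕ) :
    ZF q hev tc (k : ℤ) = CF q hev tc k := by
  rw [ZF, ZofF]
  simp

lemma ZF_neg (tc : ℕ → Matrix (BIdx nb) (BIdx nb) ℂ) (s : ℤ) (hs : s < 0) :
    ZF q hev tc s = 0 := by
  rw [ZF, ZofF, if_neg (by omega)]

end Core2

section Core3
open Polynomial

variable {m : ℕ} {nb : Fin m → ℕ} {q : Fin m → Polynomial ℂ}
  {R : (j : Fin m) → Matrix (Fin (nb j)) (Fin (nb j)) ℂ}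
variable (hev : ∀ j : Fin m, ∀ a ∈ spectrum ℂ (R j), ∀ b ∈ spectrum ℂ (R j),
    ∀ N : ℤ, a - b = (N : ℂ) → N = 0)
variable (q)

lemma tauF_trunc (tc : ℕ → Matrix (BIdx nb) (BIdx nb) ℂ) (k k' : ℕ) (h : k' ≤ k) :
    tauF tc (fun m' => CF q hev tc (min m' k)) k' = tauCF q hev tc k' := by
  unfold tauF tauCF tauF
  apply Finset.sum_congr rfl
  intro u _
  have h2 : (k' - u) ⊓ k = k' - u := by omega
  simp only [h2]

lemma ZofF_trunc (tc : ℕ → Matrix (BIdx nb) (BIdx nb) ℂ) (k : ℕ) (s : ℤ) (hs : s ≤ (k : ℤ)) :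
    ZofF (fun m' => CF q hev tc (min m' k)) s = ZF q hev tc s := by
  rw [ZofF, ZF, ZofF]
  by_cases h0 : 0 ≤ s
  · rw [if_pos h0, if_pos h0, min_eq_left (by omega : s.toNat ≤ k)]
  · rw [if_neg h0, if_neg h0]

lemma CF_succ_blk (tc : ℕ → Matrix (BIdx nb) (BIdx nb) ℂ) (k : ℕ) (j : Fin m) :
    sylv (R j) (k+1) (blkI nb j (CF q hev tc (k+1))) = blkI nb j (tauCF q hev tc k) := by
  rw [CF_succ]
  have hblk : blkI nb j (stepRaw q hev tc (fun m' => CF q hev tc (min m' k)) k)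
      = (sylvEquiv (R j) (hev j) (k+1) (by omega)).symm
          (blkI nb j (tauF tc (fun m' => CF q hev tc (min m' k)) k)) := by
    funext a b
    show (stepRaw q hev tc (fun m' => CF q hev tc (min m' k)) k) ⟨j,a⟩ ⟨j,b⟩ = _
    rw [stepRaw, Matrix.add_apply, Matrix.blockDiagonal'_apply_eq, offF]
    simp
  rw [hblk, tauF_trunc q hev tc k k le_rfl]
  have := (sylvEquiv (R j) (hev j) (k+1) (by omega)).apply_symm_apply
    (blkI nb j (tauCF q hev tc k))
  calc sylv (R j) (k+1) ((sylvEquiv (R j) (hev j) (k+1) (by omega)).symm (blkI nb j (tauCF q hev tc k)))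
      = (sylvEquiv (R j) (hev j) (k+1) (by omega))
          ((sylvEquiv (R j) (hev j) (k+1) (by omega)).symm (blkI nb j (tauCF q hev tc k))) := rfl
    _ = blkI nb j (tauCF q hev tc k) := this

lemma CF_succ_off (hq0 : ∀ j, (q j).coeff 0 = 0) (hq1 : ∀ j, (q j).coeff 1 = 0)
    (hqd : ∀ j j', j ≠ j' → q j ≠ q j')
    (tc : ℕ → Matrix (BIdx nb) (BIdx nb) ℂ) (k : ℕ) (i i' : BIdx nb) (h : i.1 ≠ i'.1) :
    lcI q i.1 i'.1 * CF q hev tc (k+1) i i'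
    = (((k : ℤ) + 2 - (d0I q i.1 i'.1) : ℤ) : ℂ)
          * ZF q hev tc ((k : ℤ) + 2 - d0I q i.1 i'.1) i i'
      - (∑ d ∈ Finset.range (d0I q i.1 i'.1),
          (q i.1 - q i'.1).coeff d * ZF q hev tc ((k : ℤ) + 1 - d0I q i.1 i'.1 + d) i i')
      - ((RcI nb R * ZF q hev tc ((k : ℤ) + 2 - d0I q i.1 i'.1)) i i'
          - (ZF q hev tc ((k : ℤ) + 2 - d0I q i.1 i'.1) * RcI nb R) i i')
      - (if 0 ≤ (k : ℤ) + 1 - d0I q i.1 i'.1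
          then tauCF q hev tc ((k : ℤ) + 1 - (d0I q i.1 i'.1 : ℤ)).toNat i i' else 0) := by
  have hd2 : 2 ≤ d0I q i.1 i'.1 := d0I_ge_two q hq0 hq1 hqd i.1 i'.1 h
  have hlc : lcI q i.1 i'.1 ≠ 0 := lcI_ne_zero q hqd i.1 i'.1 h
  rw [CF_succ]
  have hentry : (stepRaw q hev tc (fun m' => CF q hev tc (min m' k)) k) i i'
      = offF q R tc (fun m' => CF q hev tc (min m' k)) k i i' := by
    obtain ⟨j, a⟩ := i; obtain ⟨j', b⟩ := i'
    rw [stepRaw, Matrix.add_apply, Matrix.blockDiagonal'_apply_ne _ _ _ h, zero_add]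
  rw [hentry, offF]
  rw [if_neg h]
  rw [ZofF_trunc q hev tc k _ (by push_cast; omega)]
  have hsum : (∑ d ∈ Finset.range (d0I q i.1 i'.1),
        (q i.1 - q i'.1).coeff d
          * ZofF (fun m' => CF q hev tc (min m' k)) ((k : ℤ) + 1 - d0I q i.1 i'.1 + d) i i')
      = ∑ d ∈ Finset.range (d0I q i.1 i'.1),
        (q i.1 - q i'.1).coeff d * ZF q hev tc ((k : ℤ) + 1 - d0I q i.1 i'.1 + d) i i' := by
    apply Finset.sum_congr rfl
    intro d hd
    rw [Finset.mem_range] at hd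
    rw [ZofF_trunc q hev tc k _ (by push_cast; omega)]
  rw [hsum]
  have htau : (if 0 ≤ (k : ℤ) + 1 - d0I q i.1 i'.1
      then tauF tc (fun m' => CF q hev tc (min m' k)) ((k : ℤ) + 1 - (d0I q i.1 i'.1 : ℤ)).toNat i i'
      else 0)
      = (if 0 ≤ (k : ℤ) + 1 - d0I q i.1 i'.1
      then tauCF q hev tc ((k : ℤ) + 1 - (d0I q i.1 i'.1 : ℤ)).toNat i i' else 0) := by
    by_cases h0 : 0 ≤ (k : ℤ) + 1 - d0I q i.1 i'.1
    · rw [if_pos h0, if_pos h0, tauF_trunc q hev tc k _ (by omega)]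
    · rw [if_neg h0, if_neg h0]
  rw [htau]
  rw [← mul_assoc, mul_inv_cancel₀ hlc, one_mul]

end Core3

section Core4
open Polynomial

variable {m : ℕ} {nb : Fin m → ℕ} {q : Fin m → Polynomial ℂ}
  {R : (j : Fin m) → Matrix (Fin (nb j)) (Fin (nb j)) ℂ}
variable (hev : ∀ j : Fin m, ∀ a ∈ spectrum ℂ (R j), ∀ b ∈ spectrum ℂ (R j),
    ∀ N : ℤ, a - b = (N : ℂ) → N = 0)
variable (q)

lemma Ekey (hq0 : ∀ j, (q j).coeff 0 = 0) (hq1 : ∀ j, (q j).coeff 1 = 0)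
    (hqd : ∀ j j', j ≠ j' → q j ≠ q j')
    (tc : ℕ → Matrix (BIdx nb) (BIdx nb) ℂ) (t : ℤ) (i i' : BIdx nb) :
    ((t + 1 : ℤ) : ℂ) * ZF q hev tc (t+1) i i'
    = (∑ d ∈ Finset.range (DqI q + 1),
        (q i.1 - q i'.1).coeff d * ZF q hev tc (t + d) i i')
      + ((RcI nb R * ZF q hev tc (t+1)) i i' - (ZF q hev tc (t+1) * RcI nb R) i i')
      + (if 0 ≤ t then tauCF q hev tc t.toNat i i' else 0) := by
  by_cases hjj : i.1 = i'.1
  · -- diagonal block case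
    obtain ⟨j, a⟩ := i
    obtain ⟨j', b⟩ := i'
    simp only at hjj
    subst hjj
    have hsum0 : (∑ d ∈ Finset.range (DqI q + 1),
        (q j - q j).coeff d * ZF q hev tc (t + d) ⟨j,a⟩ ⟨j,b⟩) = 0 := by
      apply Finset.sum_eq_zero
      intro d _
      rw [sub_self, Polynomial.coeff_zero, zero_mul]
    rw [hsum0, zero_add]
    rcases lt_trichotomy t (-1) with ht | ht | ht
    · rw [ZF_neg q hev tc _ (by omega), if_neg (by omega)]
      simp
    · subst ht
      rw [show (-1 + 1 : ℤ) = ((0 : ℕ) : ℤ) by norm_num, ZF_ofNat, CF_zero,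
        if_neg (by omega)]
      simp
    · -- t ≥ 0
      have ht0 : 0 ≤ t := by omega
      set k := t.toNat with hkdef
      have hkt : (k : ℤ) = t := Int.toNat_of_nonneg ht0
      have h1 : t + 1 = ((k + 1 : ℕ) : ℤ) := by omega
      rw [h1, ZF_ofNat, if_pos ht0]
      have hb := CF_succ_blk q hev tc k j
      have hab := congrFun (congrFun hb a) b
      rw [sylv_apply] at hab
      rw [Matrix.sub_apply, Matrix.smul_apply, Matrix.sub_apply] at hab
      have hW : blkI nb j (CF q hev tc (k+1)) a b = CF q hev tc (k+1) ⟨j,a⟩ ⟨j,b⟩ := rfl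
      have hRc1 : (RcI nb R * CF q hev tc (k+1)) ⟨j,a⟩ ⟨j,b⟩
          = (R j * blkI nb j (CF q hev tc (k+1))) a b := by
        rw [RcI_mul_apply, Matrix.mul_apply]
        rfl
      have hRc2 : (CF q hev tc (k+1) * RcI nb R) ⟨j,a⟩ ⟨j,b⟩
          = (blkI nb j (CF q hev tc (k+1)) * R j) a b := by
        rw [mul_RcI_apply, Matrix.mul_apply]
        rfl
      have htau' : blkI nb j (tauCF q hev tc k) a b = tauCF q hev tc k ⟨j,a⟩ ⟨j,b⟩ := rfl
      rw [hRc1, hRc2]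
      rw [htau'] at hab
      rw [smul_eq_mul] at hab
      have hcast : (((k:ℕ) + 1 : ℕ) : ℂ) = (((k:ℤ) + 1 : ℤ) : ℂ) := by push_cast; ring
      rw [← hW]
      push_cast
      push_cast at hab
      linear_combination hab
  · -- off-diagonal block case
    have hd2 : 2 ≤ d0I q i.1 i'.1 := d0I_ge_two q hq0 hq1 hqd i.1 i'.1 hjj
    have hlc : lcI q i.1 i'.1 ≠ 0 := lcI_ne_zero q hqd i.1 i'.1 hjj
    have hdle : d0I q i.1 i'.1 < DqI q + 1 := natDegree_sub_lt_DqI q i.1 i'.1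
    by_cases ht : 1 - (d0I q i.1 i'.1 : ℤ) ≤ t
    · set k : ℕ := (t + d0I q i.1 i'.1 - 1).toNat with hkdef
      have hk : (k : ℤ) = t + d0I q i.1 i'.1 - 1 := Int.toNat_of_nonneg (by omega)
      have hoff := CF_succ_off q hev hq0 hq1 hqd tc k i i' hjj
      rw [show (k : ℤ) + 2 - d0I q i.1 i'.1 = t + 1 by omega,
          show (k : ℤ) + 1 - (d0I q i.1 i'.1 : ℤ) = t by omega] at hoff
      -- split the sum
      have hsplit : (∑ d ∈ Finset.range (DqI q + 1),
            (q i.1 - q i'.1).coeff d * ZF q hev tc (t + d) i i')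
          = (∑ d ∈ Finset.range (d0I q i.1 i'.1),
              (q i.1 - q i'.1).coeff d * ZF q hev tc (t + d) i i')
            + lcI q i.1 i'.1 * ZF q hev tc (t + d0I q i.1 i'.1) i i' := by
        rw [← Finset.sum_range_add_sum_Ico _ (show d0I q i.1 i'.1 + 1 ≤ DqI q + 1 by omega)]
        have hico : (∑ d ∈ Finset.Ico (d0I q i.1 i'.1 + 1) (DqI q + 1),
            (q i.1 - q i'.1).coeff d * ZF q hev tc (t + d) i i') = 0 := by
          apply Finset.sum_eq_zero
          intro d hd
          rw [Finset.mem_Ico] at hd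
          rw [Polynomial.coeff_eq_zero_of_natDegree_lt (by exact hd.1), zero_mul]
        rw [hico, add_zero, Finset.sum_range_succ]
        congr 1
      rw [hsplit]
      have hZkk : ZF q hev tc (t + d0I q i.1 i'.1) i i' = CF q hev tc (k+1) i i' := by
        rw [show t + (d0I q i.1 i'.1 : ℤ) = ((k + 1 : ℕ) : ℤ) by omega, ZF_ofNat]
      rw [hZkk, hoff]
      ring
    · -- t ≤ -d0
      push_neg at ht
      have htneg : t + 1 < 0 := by omega
      rw [ZF_neg q hev tc _ htneg, if_neg (by omega)]
      simp only [Matrix.zero_apply, mul_zero, Matrix.mul_zero, Matrix.zero_mul, sub_zero,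
        sub_self, add_zero, zero_add]
      symm
      apply Finset.sum_eq_zero
      intro d hd
      rw [Finset.mem_range] at hd
      by_cases hdz : t + d < 0
      · rw [ZF_neg q hev tc _ hdz, Matrix.zero_apply, mul_zero]
      · push_neg at hdz
        by_cases hdd : d0I q i.1 i'.1 < d
        · rw [Polynomial.coeff_eq_zero_of_natDegree_lt (by exact hdd), zero_mul]
        · -- then d = d0 and t = -d0
          have hd0 : d = d0I q i.1 i'.1 := by omega
          have ht0 : t + d = 0 := by omega
          rw [ht0, show (0:ℤ) = ((0:ℕ):ℤ) by norm_num, ZF_ofNat, CF_zero]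
          rw [Matrix.one_apply_ne (fun hc => hjj (congrArg Sigma.fst hc)), mul_zero]

end Core4

section Core5
open Polynomial

variable {m : ℕ} {nb : Fin m → ℕ} {q : Fin m → Polynomial ℂ}
  {R : (j : Fin m) → Matrix (Fin (nb j)) (Fin (nb j)) ℂ}
variable (hev : ∀ j : Fin m, ∀ a ∈ spectrum ℂ (R j), ∀ b ∈ spectrum ℂ (R j),
    ∀ N : ℤ, a - b = (N : ℂ) → N = 0)
variable (q)

/-- coefficient matrices of a power-series matrix -/
def tcOf (tps : Matrix (BIdx nb) (BIdx nb) (PowerSeries ℂ)) :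
    ℕ → Matrix (BIdx nb) (BIdx nb) ℂ :=
  fun u i i' => PowerSeries.coeff u (tps i i')

def ypsF (tps : Matrix (BIdx nb) (BIdx nb) (PowerSeries ℂ)) :
    Matrix (BIdx nb) (BIdx nb) (PowerSeries ℂ) :=
  fun i i' => PowerSeries.mk fun k => CF q hev (tcOf tps) k i i'

def YmF (tps : Matrix (BIdx nb) (BIdx nb) (PowerSeries ℂ)) :
    Matrix (BIdx nb) (BIdx nb) (LaurentSeries ℂ) :=
  (ypsF q hev tps).map (HahnSeries.ofPowerSeries ℤ ℂ)

lemma YmF_coeff (tps : Matrix (BIdx nb) (BIdx nb) (PowerSeries ℂ)) (i i' : BIdx nb) (t : ℤ) :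
    (YmF q hev tps i i').coeff t = ZF q hev (tcOf tps) t i i' := by
  rw [YmF, Matrix.map_apply]
  rcases t with n | n
  · rw [Int.ofNat_eq_coe, HahnSeries.ofPowerSeries_apply_coeff, ypsF, PowerSeries.coeff_mk,
      ZF_ofNat]
  · rw [ofPowerSeries_coeff_neg _ _ (Int.negSucc_lt_zero n),
      ZF_neg q hev _ _ (Int.negSucc_lt_zero n), Matrix.zero_apply]

lemma TmYm_coeff (tps : Matrix (BIdx nb) (BIdx nb) (PowerSeries ℂ)) (i i' : BIdx nb) (t : ℤ) :
    (((tps.map (HahnSeries.ofPowerSeries ℤ ℂ)) * YmF q hev tps) i i').coeff t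
    = if 0 ≤ t then tauCF q hev (tcOf tps) t.toNat i i' else 0 := by
  rw [YmF, ← Matrix.map_mul (f := HahnSeries.ofPowerSeries ℤ ℂ), Matrix.map_apply]
  rcases t with n | n
  · rw [Int.ofNat_eq_coe, HahnSeries.ofPowerSeries_apply_coeff, if_pos (by omega)]
    have hn : ((n : ℤ)).toNat = n := rfl
    rw [hn]
    rw [Matrix.mul_apply, map_sum]
    have h1 : ∀ i'' : BIdx nb, PowerSeries.coeff n (tps i i'' * ypsF q hev tps i'' i')
        = ∑ u ∈ Finset.range (n+1),
            tcOf tps u i i'' * CF q hev (tcOf tps) (n - u) i'' i' := by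
      intro i''
      rw [PowerSeries.coeff_mul, Finset.Nat.sum_antidiagonal_eq_sum_range_succ_mk]
      apply Finset.sum_congr rfl
      intro u _
      rw [ypsF, PowerSeries.coeff_mk]
      rfl
    rw [Finset.sum_congr rfl fun i'' _ => h1 i'']
    rw [Finset.sum_comm]
    rw [tauCF, tauF, Matrix.sum_apply]
    apply Finset.sum_congr rfl
    intro u _
    rw [Matrix.mul_apply]
  · rw [ofPowerSeries_coeff_neg _ _ (Int.negSucc_lt_zero n), if_neg (not_le.2 (Int.negSucc_lt_zero n))]

lemma master (hq0 : ∀ j, (q j).coeff 0 = 0) (hq1 : ∀ j, (q j).coeff 1 = 0)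
    (hqd : ∀ j j', j ≠ j' → q j ≠ q j')
    (tps : Matrix (BIdx nb) (BIdx nb) (PowerSeries ℂ)) :
    (YmF q hev tps).map zderiv
    = BmatI nb q R * YmF q hev tps
      + (tps.map (HahnSeries.ofPowerSeries ℤ ℂ)) * YmF q hev tps
      - YmF q hev tps * BmatI nb q R := by
  set tc := tcOf (nb := nb) tps with htc
  set Ym := YmF q hev tps with hYm
  ext i i' t
  rw [Matrix.map_apply, zderiv_coeff, YmF_coeff]
  -- expand the right-hand side
  rw [Matrix.sub_apply, Matrix.add_apply, HahnSeries.coeff_sub, HahnSeries.coeff_add]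
  rw [BmatI_eq, Matrix.add_mul, Matrix.mul_add, Matrix.add_apply, Matrix.add_apply,
    HahnSeries.coeff_add, HahnSeries.coeff_add]
  have h1 : ((Matrix.diagonal (PqI nb q) * Ym) i i').coeff t
      = ∑ d ∈ Finset.range (DqI q + 1), (q i.1).coeff d * ZF q hev tc (t + d) i i' := by
    rw [Matrix.diagonal_mul]
    rw [PqI]
    rw [polyZinv_mul_coeff _ _ _ _ (natDegree_lt_DqI q i.1)]
    apply Finset.sum_congr rfl
    intro d _
    rw [hYm, YmF_coeff]
  have h2 : (((RcI nb R).map (fun r => HahnSeries.single (-1 : ℤ) r) * Ym) i i').coeff t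
      = (RcI nb R * ZF q hev tc (t+1)) i i' := by
    rw [Matrix.mul_apply, coeff_finsum, Matrix.mul_apply]
    apply Finset.sum_congr rfl
    intro i'' _
    rw [Matrix.map_apply, single_neg_one_mul_coeff', hYm, YmF_coeff]
  have h3 : ((Ym * Matrix.diagonal (PqI nb q)) i i').coeff t
      = ∑ d ∈ Finset.range (DqI q + 1), (q i'.1).coeff d * ZF q hev tc (t + d) i i' := by
    rw [Matrix.mul_diagonal]
    rw [PqI]
    rw [mul_polyZinv_coeff _ _ _ _ (natDegree_lt_DqI q i'.1)]
    apply Finset.sum_congr rfl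
    intro d _
    rw [hYm, YmF_coeff]
  have h4 : ((Ym * (RcI nb R).map (fun r => HahnSeries.single (-1 : ℤ) r)) i i').coeff t
      = (ZF q hev tc (t+1) * RcI nb R) i i' := by
    rw [Matrix.mul_apply, coeff_finsum, Matrix.mul_apply]
    apply Finset.sum_congr rfl
    intro i'' _
    rw [Matrix.map_apply, mul_single_neg_one_coeff', hYm, YmF_coeff]
  have h5 := TmYm_coeff q hev tps i i' t
  rw [h1, h2, h3, h4, h5]
  have he := Ekey q hev hq0 hq1 hqd tc t i i'
  have hsub : (∑ d ∈ Finset.range (DqI q + 1),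
        (q i.1 - q i'.1).coeff d * ZF q hev tc (t + d) i i')
      = (∑ d ∈ Finset.range (DqI q + 1), (q i.1).coeff d * ZF q hev tc (t + d) i i')
        - (∑ d ∈ Finset.range (DqI q + 1), (q i'.1).coeff d * ZF q hev tc (t + d) i i') := by
    rw [← Finset.sum_sub_distrib]
    apply Finset.sum_congr rfl
    intro d _
    rw [Polynomial.coeff_sub, sub_mul]
  rw [hsub] at he
  linear_combination he

lemma ypsF_isUnit (tps : Matrix (BIdx nb) (BIdx nb) (PowerSeries ℂ)) :
    IsUnit (ypsF q hev tps) := by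
  rw [Matrix.isUnit_iff_isUnit_det, PowerSeries.isUnit_iff_constantCoeff]
  have hdet : (PowerSeries.constantCoeff) (ypsF q hev tps).det
      = ((ypsF q hev tps).map (PowerSeries.constantCoeff)).det :=
    RingHom.map_det (PowerSeries.constantCoeff (R := ℂ)) _
  have hconst : (ypsF q hev tps).map (PowerSeries.constantCoeff)
      = (1 : Matrix (BIdx nb) (BIdx nb) ℂ) := by
    ext i i'
    rw [Matrix.map_apply, ypsF]
    have : (PowerSeries.constantCoeff) (PowerSeries.mk fun k => CF q hev (tcOf tps) k i i')
        = CF q hev (tcOf tps) 0 i i' := by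
      rw [← PowerSeries.coeff_zero_eq_constantCoeff_apply, PowerSeries.coeff_mk]
    rw [this, CF_zero]
  rw [hdet, hconst, Matrix.det_one]
  exact isUnit_one

include hev in
lemma core_exists (hq0 : ∀ j, (q j).coeff 0 = 0) (hq1 : ∀ j, (q j).coeff 1 = 0)
    (hqd : ∀ j j', j ≠ j' → q j ≠ q j')
    (tps : Matrix (BIdx nb) (BIdx nb) (PowerSeries ℂ)) :
    ∃ Yu : (Matrix (BIdx nb) (BIdx nb) (PowerSeries ℂ))ˣ,
      (Yu.val.map (HahnSeries.ofPowerSeries ℤ ℂ)) * BmatI nb q R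
        + ((Yu.val.map (HahnSeries.ofPowerSeries ℤ ℂ)).map zderiv)
      = (BmatI nb q R + tps.map (HahnSeries.ofPowerSeries ℤ ℂ))
          * (Yu.val.map (HahnSeries.ofPowerSeries ℤ ℂ)) := by
  refine ⟨(ypsF_isUnit q hev tps).unit, ?_⟩
  rw [IsUnit.unit_spec]
  have hm := master q hev hq0 hq1 hqd tps
  rw [← YmF, hm, Matrix.add_mul]
  abel

end Core5

section Assemble

lemma zderiv_finsum {σ : Type*} (s : Finset σ) (F : σ → LaurentSeries ℂ) :
    zderiv (∑ i ∈ s, F i) = ∑ i ∈ s, zderiv (F i) := by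
  ext t
  rw [zderiv_coeff, coeff_finsum, coeff_finsum, Finset.mul_sum]
  exact Finset.sum_congr rfl fun i _ => (zderiv_coeff _ _).symm

lemma map_zderiv_mul {ι : Type*} [Fintype ι] (P Q : Matrix ι ι (LaurentSeries ℂ)) :
    (P * Q).map zderiv = P.map zderiv * Q + P * Q.map zderiv := by
  ext i j
  rw [Matrix.map_apply, Matrix.mul_apply, zderiv_finsum, Matrix.add_apply,
    Matrix.mul_apply, Matrix.mul_apply, ← Finset.sum_add_distrib,
    coeff_finsum, coeff_finsum]
  apply Finset.sum_congr rfl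
  intro k _
  rw [zderiv_mul, Matrix.map_apply, Matrix.map_apply]

lemma glMap_val_entry_tame {n : ℕ} (X : GLps n) (i j : Fin n) :
    Tame ((glMap X).val i j) := by
  show Tame ((((HahnSeries.ofPowerSeries ℤ ℂ).mapMatrix) X.val) i j)
  rw [RingHom.mapMatrix_apply, Matrix.map_apply]
  exact tame_ofPowerSeries _

lemma glMap_inv_val {n : ℕ} (X : GLps n) :
    ((glMap X)⁻¹).val = (glMap (X⁻¹)).val := by
  rw [← map_inv]

lemma glMap_inv_entry_tame {n : ℕ} (X : GLps n) (i j : Fin n) :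
    Tame (((glMap X)⁻¹).val i j) := by
  rw [glMap_inv_val]
  exact glMap_val_entry_tame _ i j

lemma gaugeT_eq_iff {n : ℕ} (X : GLps n) (B A : Matrix (Fin n) (Fin n) (LaurentSeries ℂ)) :
    A = gaugeT X B
    ↔ A * (glMap X).val = (glMap X).val * B + ((glMap X).val.map zderiv) := by
  have h1 : ((glMap X)⁻¹).val * (glMap X).val = 1 := Units.inv_mul _
  have h2 : (glMap X).val * ((glMap X)⁻¹).val = 1 := Units.mul_inv _
  constructor
  · rintro rfl
    rw [gaugeT, add_mul, mul_assoc _ _ (glMap X).val, mul_assoc _ _ (glMap X).val, h1,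
      mul_one, mul_one]
  · intro h
    have : A = A * ((glMap X).val * ((glMap X)⁻¹).val) := by rw [h2, mul_one]
    rw [this, ← mul_assoc, h, gaugeT, add_mul]
end Assemble


end

/-- if, for each `j`, no two eigenvalues of `R_j` differ by a nonzero
integer, then a matrix `A` has `ι(A) ∈ O^tru_B` (i.e. `A ≡ X B X⁻¹ mod M(n,ℂ[[z]])` for
some `X ∈ GL(n,ℂ[[z]])`) if and only if `A = X[B]` for some `X ∈ GL(n, ℂ[[z]])`. -/
theorem preimage_truncated_orbit_eq_orbit (n : ℕ) (D : HTLData n)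
    (hev : ∀ (j : Fin D.m), ∀ a ∈ spectrum ℂ (D.R j), ∀ b ∈ spectrum ℂ (D.R j),
      ∀ N : ℤ, a - b = (N : ℂ) → N = 0)
    (A : Matrix (Fin n) (Fin n) (LaurentSeries ℂ)) :
    (∃ X : GLps n,
        ∀ i j, Tame ((A - (glMap X).val * D.mat * ((glMap X)⁻¹).val) i j))
    ↔ (∃ X : GLps n, A = gaugeT X D.mat) := by
  classical
  set e := D.sigmaEquiv with he
  constructor
  · rintro ⟨X, hX⟩
    set Xl := (glMap X).val with hXldef
    set Xinv := ((glMap X)⁻¹).val with hXinvdef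
    have h2 : Xl * Xinv = 1 := Units.mul_inv _
    have h1 : Xinv * Xl = 1 := Units.inv_mul _
    set S := A - Xl * D.mat * Xinv with hS
    set G := Xinv * A * Xl - Xinv * (Xl.map zderiv) with hGdef
    set T := G - D.mat with hTdef
    have hTeq : T = Xinv * S * Xl - Xinv * (Xl.map zderiv) := by
      rw [hTdef, hGdef, hS]
      rw [Matrix.mul_sub, Matrix.sub_mul]
      have h3 : Xinv * (Xl * D.mat * Xinv) * Xl = D.mat := by
        simp only [← Matrix.mul_assoc]
        rw [h1, Matrix.one_mul, Matrix.mul_assoc, h1, Matrix.mul_one]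
      rw [h3]
      abel
    have hTt : ∀ i j, Tame (T i j) := by
      intro i j
      rw [hTeq, Matrix.sub_apply]
      apply tame_sub
      · rw [Matrix.mul_apply]
        apply tame_sum
        intro k _
        apply tame_mul _ (glMap_val_entry_tame X k j)
        rw [Matrix.mul_apply]
        apply tame_sum
        intro l _
        exact tame_mul (glMap_inv_entry_tame X i l) (hX l k)
      · rw [Matrix.mul_apply]
        apply tame_sum
        intro k _
        apply tame_mul (glMap_inv_entry_tame X i k)
        rw [Matrix.map_apply]
        exact tame_zderiv (glMap_val_entry_tame X k j)
    choose tn htn using fun i j => (tame_iff (T i j)).1 (hTt i j)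
    set tpsn : Matrix (Fin n) (Fin n) (PowerSeries ℂ) := fun i j => tn i j with htpsn
    have htps : tpsn.map (HahnSeries.ofPowerSeries ℤ ℂ) = T :=
      Matrix.ext fun i j => htn i j
    set tpsI : Matrix (BIdx D.nb) (BIdx D.nb) (PowerSeries ℂ) :=
      Matrix.reindex e.symm e.symm tpsn with htpsI
    obtain ⟨Yu, hYu⟩ := core_exists D.q hev D.hq0 D.hq1 D.hqd tpsI
    set ρps := Matrix.reindexAlgEquiv (PowerSeries ℂ) (PowerSeries ℂ) e with hρps
    set Wu : GLps n := ⟨ρps Yu.val, ρps Yu.inv,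
      by rw [← _root_.map_mul ρps, Yu.val_inv, _root_.map_one ρps],
      by rw [← _root_.map_mul ρps, Yu.inv_val, _root_.map_one ρps]⟩ with hWu
    set Wl := (glMap Wu).val with hWldef
    set ρL := Matrix.reindexAlgEquiv (LaurentSeries ℂ) (LaurentSeries ℂ) e with hρL
    have hWlval : Wl = ρL ((Yu.val).map (HahnSeries.ofPowerSeries ℤ ℂ)) := by
      show (((HahnSeries.ofPowerSeries ℤ ℂ).mapMatrix) Wu.val) = _
      rw [RingHom.mapMatrix_apply]
      show (Matrix.reindex e e Yu.val).map _ = _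
      rw [hρL, Matrix.reindexAlgEquiv_apply, Matrix.reindex_apply, Matrix.reindex_apply,
        Matrix.submatrix_map]
    have hρmap : ∀ M : Matrix (BIdx D.nb) (BIdx D.nb) (LaurentSeries ℂ),
        (ρL M).map zderiv = ρL (M.map zderiv) := by
      intro M
      rw [hρL, Matrix.reindexAlgEquiv_apply, Matrix.reindexAlgEquiv_apply,
        Matrix.reindex_apply, Matrix.reindex_apply, Matrix.submatrix_map]
    have hBI : ρL (BmatI D.nb D.q D.R) = D.mat := rfl
    have hTI : ρL (tpsI.map (HahnSeries.ofPowerSeries ℤ ℂ)) = T := by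
      have hcomm : tpsI.map (HahnSeries.ofPowerSeries ℤ ℂ)
          = Matrix.reindex e.symm e.symm (tpsn.map (HahnSeries.ofPowerSeries ℤ ℂ)) := by
        rw [htpsI, Matrix.reindex_apply, Matrix.reindex_apply, Matrix.submatrix_map]
      rw [hcomm, htps, hρL, Matrix.reindexAlgEquiv_apply, ← Matrix.reindex_symm,
        Equiv.apply_symm_apply]
    have hW : Wl * D.mat + Wl.map zderiv = (D.mat + T) * Wl := by
      calc Wl * D.mat + Wl.map zderiv
          = ρL ((Yu.val).map (HahnSeries.ofPowerSeries ℤ ℂ) * BmatI D.nb D.q D.R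
              + ((Yu.val).map (HahnSeries.ofPowerSeries ℤ ℂ)).map zderiv) := by
            rw [map_add, _root_.map_mul ρL, hBI, ← hρmap, ← hWlval]
        _ = ρL ((BmatI D.nb D.q D.R + tpsI.map (HahnSeries.ofPowerSeries ℤ ℂ))
              * ((Yu.val).map (HahnSeries.ofPowerSeries ℤ ℂ))) := by rw [hYu]
        _ = (D.mat + T) * Wl := by rw [_root_.map_mul ρL, map_add, hBI, hTI, ← hWlval]
    have hXG : Xl * G = A * Xl - Xl.map zderiv := by
      rw [hGdef, Matrix.mul_sub]
      rw [← Matrix.mul_assoc, ← Matrix.mul_assoc, h2, Matrix.one_mul]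
      rw [← Matrix.mul_assoc, h2, Matrix.one_mul]
    have hG' : G = D.mat + T := by rw [hTdef]; abel
    refine ⟨X * Wu, ?_⟩
    rw [gaugeT_eq_iff]
    have hval : (glMap (X * Wu)).val = Xl * Wl := by rw [_root_.map_mul glMap, Units.val_mul]
    rw [hval]
    calc A * (Xl * Wl) = (A * Xl) * Wl := by rw [Matrix.mul_assoc]
      _ = (Xl * G + Xl.map zderiv) * Wl := by rw [hXG, sub_add_cancel]
      _ = Xl * (G * Wl) + (Xl.map zderiv) * Wl := by
          rw [Matrix.add_mul, Matrix.mul_assoc]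
      _ = Xl * (Wl * D.mat + Wl.map zderiv) + (Xl.map zderiv) * Wl := by
          rw [hG', hW]
      _ = (Xl * Wl) * D.mat + (Xl * (Wl.map zderiv) + (Xl.map zderiv) * Wl) := by
          rw [Matrix.mul_add, ← Matrix.mul_assoc]
          abel
      _ = (Xl * Wl) * D.mat + ((Xl * Wl).map zderiv) := by
          rw [map_zderiv_mul]
          abel
  · rintro ⟨X, rfl⟩
    refine ⟨X, ?_⟩
    intro i j
    have hrw : gaugeT X D.mat - (glMap X).val * D.mat * ((glMap X)⁻¹).val
        = ((glMap X).val.map zderiv) * ((glMap X)⁻¹).val := by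
      rw [gaugeT]
      abel
    rw [hrw, Matrix.mul_apply]
    apply tame_sum
    intro k _
    apply tame_mul
    · rw [Matrix.map_apply]
      exact tame_zderiv (glMap_val_entry_tame X i k)
    · exact glMap_inv_entry_tame X k j
end

section
/- Let B = Σ_{s=1}^{k} B_s z^{−s} be an HTL normal form of size n and pole order k ≥ 1. For s = 1,…,k−1 let ℂⁿ = ⊕_{t=1}^{m_s} V_{⟨s,t⟩} be the simultaneous eigenspace decomposition of ℂⁿ for (B_{s+1}, B_{s+2}, …, B_k), with surjections π_s: {1,…,m_s} → {1,…,m_{s+1}} such that V_{⟨s,t⟩} ⊆ V_{⟨s+1,π_s(t)⟩}, and fix total orderings ≺ on each {1,…,m_s} such that t₁ ≺ t₂ implies π_s(t₁) ⪯ π_s(t₂). Define 𝔭_s^+ := ⊕_{t₁ ⪰ t₂} Hom(V_{⟨s,t₁⟩}, V_{⟨s,t₂⟩}) and 𝔲_s^− := ⊕_{t₁ ≺ t₂} Hom(V_{⟨s,t₁⟩}, V_{⟨s,t₂⟩}) for s = 1,…,k−1, with 𝔭_k^+ := M(n,ℂ) and 𝔲_k^− := {0}. Set G^o_k := {I_n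 + Σ_{s=1}^{k−1} g_s z^s} ⊆ GL(n,ℂ[z]/(z^k)), P⁺ := {Σ_{s=0}^{k−1} P_s z^s ∈ G^o_k : P_s ∈ 𝔭_{s+1}^+} and U⁻ := {Σ_{s=0}^{k−1} U_s z^s ∈ G^o_k : U_s ∈ 𝔲_{s+1}^− for s ≥ 1}. Then for every g ∈ G^o_k there exist unique u ∈ U⁻ and p ∈ P⁺ with g = u·p. -/
/-!
STATEMENT 7: Gauss decomposition `G^o_k = U⁻ · P⁺` associated with an HTL normal form
`B = Σ_{s=1}^k B_s z^{−s}` and a compatible family of total orderings on the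
simultaneous eigenspace decompositions of `(B_{s+1}, …, B_k)`.

Elements of `G^o_k ⊆ GL(n, ℂ[z]/(z^k))` are encoded as their coefficient tuples
`g : Fin k → M(n,ℂ)` with `g 0 = 1`; multiplication is truncated convolution.
The total preorders `≺_s` on the level-`s` eigenspace classes are encoded by rank
functions `ord s : Fin n → ℕ` whose fibers are exactly the classes.
-/

open Matrix BigOperators

noncomputable section

namespace HTLData

variable {n : ℕ} (D : HTLData n)

/-- The irregular polynomial attached to an index `a ∈ {1,…,n}`: the `q_j` of the block
of `a`.  Its degree-`s` coefficient is the diagonal entry of `B_s` at `a` (`s ≥ 2`). -/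
def Qp (a : Fin n) : Polynomial ℂ := D.q (D.sigmaEquiv.symm a).1

/-- Two indices lie in the same simultaneous eigenspace `V_{⟨s,t⟩}` of
`(B_{s+1}, …, B_k)` iff the coefficients of their polynomials agree in all degrees
`> s`. -/
def SameLevel (s : ℕ) (a b : Fin n) : Prop :=
  ∀ d : ℕ, s + 1 ≤ d → (D.Qp a).coeff d = (D.Qp b).coeff d

/-- `ord` encodes a compatible family of total orderings of the level-`s` eigenspace
classes, `s = 1, …, k−1`: the fibers of `ord s` are the classes, and the orderings are
compatible with the refinement maps `π_s`. -/
def IsOrderingFamily (k : ℕ) (ord : ℕ → Fin n → ℕ) : Prop :=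
  (∀ s, 1 ≤ s → s ≤ k - 1 → ∀ a b, (ord s a = ord s b ↔ D.SameLevel s a b))
  ∧ (∀ s, 1 ≤ s → s + 1 ≤ k - 1 → ∀ a b, ord s a < ord s b → ord (s + 1) a ≤ ord (s + 1) b)

end HTLData

/-- Truncated convolution: the product in `M(n, ℂ[z]/(z^k))` of coefficient tuples. -/
def truncMul {n k : ℕ} (u p : Fin k → Matrix (Fin n) (Fin n) ℂ) :
    Fin k → Matrix (Fin n) (Fin n) ℂ := fun s =>
  ∑ t : Fin k, if h : (t : ℕ) ≤ (s : ℕ) then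
      u t * p ⟨(s : ℕ) - (t : ℕ), by omega⟩ else 0

/-- Membership in `U⁻`: constant term `1`, the coefficient of `z^s` lies in
`𝔲_{s+1}^−` (strictly lower triangular with respect to the level-`(s+1)` ordering,
`𝔲_k^− = 0`). -/
def UminusMem {n k : ℕ} (hk : 0 < k) (ord : ℕ → Fin n → ℕ)
    (u : Fin k → Matrix (Fin n) (Fin n) ℂ) : Prop :=
  u ⟨0, hk⟩ = 1 ∧
  ∀ s : Fin k, 1 ≤ (s : ℕ) →
    (if (s : ℕ) + 1 = k then u s = 0
     else ∀ a b, ¬ (ord ((s : ℕ) + 1) a < ord ((s : ℕ) + 1) b) → u s b a = 0)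

/-- Membership in `P⁺`: constant term `1`, the coefficient of `z^s` lies in
`𝔭_{s+1}^+` (block upper triangular with respect to the level-`(s+1)` ordering,
`𝔭_k^+ = M(n,ℂ)`). -/
def PplusMem {n k : ℕ} (hk : 0 < k) (ord : ℕ → Fin n → ℕ)
    (p : Fin k → Matrix (Fin n) (Fin n) ℂ) : Prop :=
  p ⟨0, hk⟩ = 1 ∧
  ∀ s : Fin k, 1 ≤ (s : ℕ) → (s : ℕ) + 1 ≤ k - 1 →
    ∀ a b, ord ((s : ℕ) + 1) a < ord ((s : ℕ) + 1) b → p s b a = 0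

end

noncomputable section GaussAux

variable {n k : ℕ}

def GMat (n : ℕ) := Matrix (Fin n) (Fin n) ℂ

def Ubody (ord : ℕ → Fin n → ℕ) (s : Fin k) (A : Matrix (Fin n) (Fin n) ℂ) : Prop :=
  if (s : ℕ) + 1 = k then A = 0
  else ∀ a b, ¬ (ord ((s : ℕ) + 1) a < ord ((s : ℕ) + 1) b) → A b a = 0

def Pbody (ord : ℕ → Fin n → ℕ) (s : Fin k) (A : Matrix (Fin n) (Fin n) ℂ) : Prop :=
  (s : ℕ) + 1 ≤ k - 1 → ∀ a b, ord ((s : ℕ) + 1) a < ord ((s : ℕ) + 1) b → A b a = 0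

def Elower (u p : Fin k → Matrix (Fin n) (Fin n) ℂ) (s : Fin k) :
    Matrix (Fin n) (Fin n) ℂ :=
  ∑ t : Fin k, if h : 1 ≤ (t : ℕ) ∧ (t : ℕ) < (s : ℕ) then
    u t * p ⟨(s : ℕ) - (t : ℕ), lt_of_le_of_lt (Nat.sub_le _ _) s.isLt⟩ else 0

def Good (hk : 0 < k) (ord : ℕ → Fin n → ℕ)
    (g u p : Fin k → Matrix (Fin n) (Fin n) ℂ) (j : ℕ) : Prop :=
  (0 < j → u ⟨0, hk⟩ = 1 ∧ p ⟨0, hk⟩ = 1) ∧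
  (∀ s : Fin k, 1 ≤ (s : ℕ) → (s : ℕ) < j → Ubody ord s (u s) ∧ Pbody ord s (p s)) ∧
  (∀ s : Fin k, j ≤ (s : ℕ) → u s = 0 ∧ p s = 0) ∧
  (∀ s : Fin k, (s : ℕ) < j → truncMul u p s = g s)

lemma truncMul_congr (u u' p p' : Fin k → Matrix (Fin n) (Fin n) ℂ) (s : Fin k)
    (h : ∀ t : Fin k, (t : ℕ) ≤ (s : ℕ) → u t = u' t ∧ p t = p' t) :
    truncMul u p s = truncMul u' p' s := by
  unfold truncMul
  refine Finset.sum_congr rfl fun t _ => ?_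
  split_ifs with ht
  · rw [(h t ht).1, (h ⟨(s : ℕ) - (t : ℕ), by omega⟩ (Nat.sub_le _ _)).2]
  · rfl

lemma Elower_congr (u u' p p' : Fin k → Matrix (Fin n) (Fin n) ℂ) (s : Fin k)
    (h : ∀ t : Fin k, (t : ℕ) < (s : ℕ) → u t = u' t ∧ p t = p' t) :
    Elower u p s = Elower u' p' s := by
  unfold Elower
  refine Finset.sum_congr rfl fun t _ => ?_
  split_ifs with ht
  · rw [(h t ht.2).1, (h ⟨(s : ℕ) - (t : ℕ), _⟩ (by simp; omega)).2]
  · rfl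

lemma truncMul_eq_core (hk : 0 < k) (u p : Fin k → Matrix (Fin n) (Fin n) ℂ) (s : Fin k)
    (hs : 1 ≤ (s : ℕ)) (hu0 : u ⟨0, hk⟩ = 1) (hp0 : p ⟨0, hk⟩ = 1) :
    truncMul u p s = u s + p s + Elower u p s := by
  have key : ∀ t : Fin k,
      (if h : (t : ℕ) ≤ (s : ℕ) then
        u t * p ⟨(s : ℕ) - (t : ℕ), by omega⟩ else 0)
      = (if h : 1 ≤ (t : ℕ) ∧ (t : ℕ) < (s : ℕ) then
          u t * p ⟨(s : ℕ) - (t : ℕ), lt_of_le_of_lt (Nat.sub_le _ _) s.isLt⟩ else 0)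
        + (if t = ⟨0, hk⟩ then p s else 0) + (if t = s then u s else 0) := by
    intro t
    by_cases ht0 : t = ⟨0, hk⟩
    · subst ht0
      have h1 : ¬ (1 ≤ (0 : ℕ) ∧ (0 : ℕ) < (s : ℕ)) := by omega
      have h2 : (⟨0, hk⟩ : Fin k) ≠ s := by
        intro h; rw [← h] at hs; simp at hs
      rw [dif_pos (Nat.zero_le _), dif_neg h1, if_pos rfl, if_neg h2, hu0, one_mul]
      have : (⟨(s : ℕ) - 0, lt_of_le_of_lt (Nat.sub_le _ _) s.isLt⟩ : Fin k) = s := by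
        apply Fin.ext; simp
      rw [this]; abel
    · by_cases hts : t = s
      · subst hts
        have h1 : ¬ (1 ≤ (t : ℕ) ∧ (t : ℕ) < (t : ℕ)) := by omega
        rw [dif_pos le_rfl, dif_neg h1, if_neg ht0, if_pos rfl]
        have : (⟨(t : ℕ) - (t : ℕ), lt_of_le_of_lt (Nat.sub_le _ _) t.isLt⟩ : Fin k) = ⟨0, hk⟩ := by
          apply Fin.ext; simp
        rw [this, hp0, mul_one]; abel
      · rw [if_neg ht0, if_neg hts]
        have ht0' : 1 ≤ (t : ℕ) := by
          by_contra h
          exact ht0 (Fin.ext (by simp only [Fin.val_mk]; omega))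
        by_cases hle : (t : ℕ) ≤ (s : ℕ)
        · have hlt : (t : ℕ) < (s : ℕ) := lt_of_le_of_ne hle (fun h => hts (Fin.ext h))
          rw [dif_pos hle, dif_pos ⟨ht0', hlt⟩]; abel
        · have : ¬ (1 ≤ (t : ℕ) ∧ (t : ℕ) < (s : ℕ)) := by omega
          rw [dif_neg hle, dif_neg this]; abel
  unfold truncMul Elower
  rw [Finset.sum_congr rfl (fun t _ => key t)]
  rw [Finset.sum_add_distrib, Finset.sum_add_distrib,
    Finset.sum_ite_eq' Finset.univ (⟨0, hk⟩ : Fin k) (fun _ => p s),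
    Finset.sum_ite_eq' Finset.univ s (fun _ => u s)]
  simp only [Finset.mem_univ, if_pos]
  abel

lemma truncMul_zero_coeff (hk : 0 < k) (u p : Fin k → Matrix (Fin n) (Fin n) ℂ)
    (hu0 : u ⟨0, hk⟩ = 1) (hp0 : p ⟨0, hk⟩ = 1) :
    truncMul u p ⟨0, hk⟩ = 1 := by
  unfold truncMul
  rw [Finset.sum_eq_single (⟨0, hk⟩ : Fin k)]
  · rw [dif_pos (Nat.le_refl _), hu0, one_mul]
    exact hp0
  · intro t _ ht
    have htv : (t : ℕ) ≠ 0 := fun h => ht (Fin.ext (by simp [h]))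
    rw [dif_neg]
    simp only [Fin.val_mk]
    omega
  · intro h; exact absurd (Finset.mem_univ _) h

lemma split_exists_unique (ord : ℕ → Fin n → ℕ) (sj : Fin k)
    (M : Matrix (Fin n) (Fin n) ℂ) :
    ∃! XY : Matrix (Fin n) (Fin n) ℂ × Matrix (Fin n) (Fin n) ℂ,
      Ubody ord sj XY.1 ∧ Pbody ord sj XY.2 ∧ XY.1 + XY.2 = M := by
  by_cases hj1 : (sj : ℕ) + 1 = k
  · refine ⟨⟨0, M⟩, ⟨?_, ?_, ?_⟩, ?_⟩
    · unfold Ubody; rw [if_pos hj1]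
    · intro hle; omega
    · simp
    · rintro ⟨X, Y⟩ ⟨hX, hY, hXY⟩
      dsimp only at hX hY hXY
      unfold Ubody at hX; rw [if_pos hj1] at hX
      simp only [Prod.mk.injEq]
      refine ⟨hX, ?_⟩
      rw [hX, zero_add] at hXY
      exact hXY
  · set X : Matrix (Fin n) (Fin n) ℂ :=
      Matrix.of fun b a => if ord ((sj : ℕ) + 1) a < ord ((sj : ℕ) + 1) b then M b a else 0
      with hXdef
    refine ⟨⟨X, M - X⟩, ⟨?_, ?_, ?_⟩, ?_⟩
    · unfold Ubody; rw [if_neg hj1]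
      intro a b hab
      simp only [hXdef, Matrix.of_apply, if_neg hab]
    · intro _ a b hab
      simp only [Matrix.sub_apply, hXdef, Matrix.of_apply, if_pos hab, sub_self]
    · exact add_sub_cancel X M
    · rintro ⟨X', Y'⟩ ⟨hX', hY', hXY'⟩
      dsimp only at hX' hY' hXY'
      unfold Ubody at hX'; rw [if_neg hj1] at hX'
      have hle : (sj : ℕ) + 1 ≤ k - 1 := by have := sj.isLt; omega
      have hent : ∀ b a, X' b a + Y' b a = M b a := fun b a => by
        rw [← hXY']; rfl
      have hXeq : X' = X := by
        ext b a
        by_cases hab : ord ((sj : ℕ) + 1) a < ord ((sj : ℕ) + 1) b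
        · have := hent b a
          rw [hY' hle a b hab, add_zero] at this
          simp only [hXdef, Matrix.of_apply, if_pos hab, this]
        · rw [hX' a b hab]
          simp only [hXdef, Matrix.of_apply, if_neg hab]
      simp only [Prod.mk.injEq]
      refine ⟨hXeq, ?_⟩
      rw [← hXY', hXeq, add_sub_cancel_left]

lemma good_exists_unique (hk : 0 < k) (ord : ℕ → Fin n → ℕ)
    (g : Fin k → Matrix (Fin n) (Fin n) ℂ) (hg : g ⟨0, hk⟩ = 1) (j : ℕ) :
    ∃! up : (Fin k → Matrix (Fin n) (Fin n) ℂ) × (Fin k → Matrix (Fin n) (Fin n) ℂ),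
      Good hk ord g up.1 up.2 j := by
  induction j with
  | zero =>
    refine ⟨⟨0, 0⟩, ⟨fun h => absurd h (by omega), fun s _ hs => absurd hs (Nat.not_lt_zero _),
      fun s _ => ⟨rfl, rfl⟩, fun s hs => absurd hs (Nat.not_lt_zero _)⟩, ?_⟩
    rintro ⟨y1, y2⟩ ⟨_, _, h3, _⟩
    dsimp only at h3
    simp only [Prod.mk.injEq]
    exact ⟨funext fun t => (h3 t (Nat.zero_le _)).1, funext fun t => (h3 t (Nat.zero_le _)).2⟩
  | succ j ih =>
    obtain ⟨⟨u, p⟩, hup, huniq⟩ := ih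
    obtain ⟨h1, h2, h3, h4⟩ := hup
    dsimp only at h1 h2 h3 h4
    by_cases hjk : j < k
    · by_cases hj0 : j = 0
      · subst hj0
        have hU0 : Function.update u (⟨0, hk⟩ : Fin k) 1 ⟨0, hk⟩ = 1 :=
          Function.update_self _ _ _
        have hP0 : Function.update p (⟨0, hk⟩ : Fin k) 1 ⟨0, hk⟩ = 1 :=
          Function.update_self _ _ _
        refine ⟨⟨Function.update u ⟨0, hk⟩ 1, Function.update p ⟨0, hk⟩ 1⟩,
          ⟨fun _ => ⟨hU0, hP0⟩, fun s hs hs1 => absurd hs1 (by omega),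
          fun s hs => ?_, fun s hs => ?_⟩, ?_⟩
        · dsimp only
          have hne : s ≠ ⟨0, hk⟩ := fun h => by rw [h] at hs; simp at hs
          rw [Function.update_of_ne hne, Function.update_of_ne hne]
          exact h3 s (Nat.zero_le _)
        · dsimp only
          have hse : s = ⟨0, hk⟩ := Fin.ext (by simp only [Fin.val_mk]; omega)
          rw [hse, truncMul_zero_coeff hk _ _ hU0 hP0, hg]
        · rintro ⟨y1, y2⟩ ⟨k1, k2, k3, k4⟩
          dsimp only at k1 k2 k3 k4
          simp only [Prod.mk.injEq]
          constructor <;> funext t <;> by_cases htv : (t : ℕ) = 0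
          · have hte : t = ⟨0, hk⟩ := Fin.ext (by simp only [Fin.val_mk]; omega)
            rw [hte, (k1 Nat.one_pos).1, hU0]
          · have hne : t ≠ ⟨0, hk⟩ := fun h => htv (by rw [h])
            rw [(k3 t (by omega)).1, Function.update_of_ne hne]
            exact ((h3 t (Nat.zero_le _)).1).symm
          · have hte : t = ⟨0, hk⟩ := Fin.ext (by simp only [Fin.val_mk]; omega)
            rw [hte, (k1 Nat.one_pos).2, hP0]
          · have hne : t ≠ ⟨0, hk⟩ := fun h => htv (by rw [h])
            rw [(k3 t (by omega)).2, Function.update_of_ne hne]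
            exact ((h3 t (Nat.zero_le _)).2).symm
      · -- 1 ≤ j < k
        have hj1 : 1 ≤ j := by omega
        set sj : Fin k := ⟨j, hjk⟩ with hsj
        have hsjv : (sj : ℕ) = j := rfl
        have hu0 : u ⟨0, hk⟩ = 1 := (h1 (by omega)).1
        have hp0 : p ⟨0, hk⟩ = 1 := (h1 (by omega)).2
        have h0ne : (⟨0, hk⟩ : Fin k) ≠ sj := fun h => by
          have := congrArg Fin.val h; simp only [Fin.val_mk] at this; omega
        set M : Matrix (Fin n) (Fin n) ℂ := g sj - Elower u p sj with hM
        obtain ⟨⟨X, Y⟩, ⟨hXu, hYp, hXY⟩, hsplit⟩ := split_exists_unique ord sj M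
        dsimp only at hXu hYp hXY
        have hU0 : Function.update u sj X ⟨0, hk⟩ = 1 := by
          rw [Function.update_of_ne h0ne]; exact hu0
        have hP0 : Function.update p sj Y ⟨0, hk⟩ = 1 := by
          rw [Function.update_of_ne h0ne]; exact hp0
        have hUagree : ∀ t : Fin k, (t : ℕ) < j →
            Function.update u sj X t = u t ∧ Function.update p sj Y t = p t := by
          intro t ht
          have hne : t ≠ sj := fun h => by
            have := congrArg Fin.val h; omega
          exact ⟨Function.update_of_ne hne _ _, Function.update_of_ne hne _ _⟩
        refine ⟨⟨Function.update u sj X, Function.update p sj Y⟩,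
          ⟨fun _ => ⟨hU0, hP0⟩, ?_, ?_, ?_⟩, ?_⟩
        · intro s hs1 hsj1
          dsimp only
          by_cases hsv : (s : ℕ) = j
          · have hse : s = sj := Fin.ext (by omega)
            rw [hse, Function.update_self, Function.update_self]
            exact ⟨hXu, hYp⟩
          · have hlt : (s : ℕ) < j := by omega
            rw [(hUagree s hlt).1, (hUagree s hlt).2]
            exact h2 s hs1 hlt
        · intro s hs
          dsimp only
          have hne : s ≠ sj := fun h => by
            have := congrArg Fin.val h; omega
          rw [Function.update_of_ne hne, Function.update_of_ne hne]
          exact h3 s (by omega)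
        · intro s hs
          dsimp only
          by_cases hsv : (s : ℕ) = j
          · have hse : s = sj := Fin.ext (by omega)
            rw [hse, truncMul_eq_core hk _ _ sj (by omega) hU0 hP0,
              Elower_congr (Function.update u sj X) u (Function.update p sj Y) p sj
                (fun t ht => hUagree t (by omega)),
              Function.update_self, Function.update_self, hXY, hM]
            abel
          · have hlt : (s : ℕ) < j := by omega
            rw [truncMul_congr (Function.update u sj X) u (Function.update p sj Y) p s
              (fun t ht => hUagree t (by omega))]
            exact h4 s hlt
        · rintro ⟨y1, y2⟩ ⟨k1, k2, k3, k4⟩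
          dsimp only at k1 k2 k3 k4
          have hGood0 : Good hk ord g (Function.update y1 sj 0) (Function.update y2 sj 0) j := by
            refine ⟨fun _ => ?_, ?_, ?_, ?_⟩
            · rw [Function.update_of_ne h0ne, Function.update_of_ne h0ne]
              exact k1 (by omega)
            · intro s hs1 hslt
              have hne : s ≠ sj := fun h => by
                have := congrArg Fin.val h; omega
              rw [Function.update_of_ne hne, Function.update_of_ne hne]
              exact k2 s hs1 (by omega)
            · intro s hs
              by_cases hsv : (s : ℕ) = j
              · have hse : s = sj := Fin.ext (by omega)
                rw [hse, Function.update_self, Function.update_self]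
                exact ⟨rfl, rfl⟩
              · have hne : s ≠ sj := fun h => by
                  have := congrArg Fin.val h; omega
                rw [Function.update_of_ne hne, Function.update_of_ne hne]
                exact k3 s (by omega)
            · intro s hslt
              rw [truncMul_congr _ y1 _ y2 s (fun t ht => ?_)]
              · exact k4 s (by omega)
              · have hne : t ≠ sj := fun h => by
                  have := congrArg Fin.val h; omega
                exact ⟨Function.update_of_ne hne _ _, Function.update_of_ne hne _ _⟩
          have heq := huniq ⟨_, _⟩ hGood0
          have hequ : Function.update y1 sj 0 = u := congrArg Prod.fst heq
          have heqp : Function.update y2 sj 0 = p := congrArg Prod.snd heq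
          have hyagree : ∀ t : Fin k, t ≠ sj → y1 t = u t ∧ y2 t = p t := by
            intro t ht
            exact ⟨by rw [← hequ, Function.update_of_ne ht],
                   by rw [← heqp, Function.update_of_ne ht]⟩
          have hmul := k4 sj (by omega)
          rw [truncMul_eq_core hk y1 y2 sj (by omega) (k1 (by omega)).1 (k1 (by omega)).2,
            Elower_congr y1 u y2 p sj (fun t ht => hyagree t (fun h => by
              have := congrArg Fin.val h; omega))] at hmul
          have hsum : y1 sj + y2 sj = M := by
            rw [hM, eq_sub_iff_add_eq]
            exact hmul
          have hcon := k2 sj (by omega) (by omega)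
          have hxy := hsplit ⟨y1 sj, y2 sj⟩ ⟨hcon.1, hcon.2, hsum⟩
          have hx1 : y1 sj = X := congrArg Prod.fst hxy
          have hy2' : y2 sj = Y := congrArg Prod.snd hxy
          simp only [Prod.mk.injEq]
          constructor <;> funext t <;> by_cases hte : t = sj
          · rw [hte, hx1, Function.update_self]
          · rw [(hyagree t hte).1, Function.update_of_ne hte]
          · rw [hte, hy2', Function.update_self]
          · rw [(hyagree t hte).2, Function.update_of_ne hte]
    · -- k ≤ j : Good (j+1) coincides with Good j
      refine ⟨⟨u, p⟩, ⟨fun _ => h1 (by omega), fun s hs1 _ => h2 s hs1 (by omega),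
        fun s hs => absurd s.isLt (by omega), fun s _ => h4 s (by omega)⟩, ?_⟩
      rintro ⟨y1, y2⟩ ⟨k1, k2, k3, k4⟩
      dsimp only at k1 k2 k3 k4
      exact huniq ⟨y1, y2⟩ ⟨fun h => k1 (by omega), fun s hs1 hs2 => k2 s hs1 (by omega),
        fun s hs => absurd s.isLt (by omega), fun s hs => k4 s (by omega)⟩

end GaussAux

/-- STATEMENT 7: every `g ∈ G^o_k` factors uniquely as `g = u·p` with `u ∈ U⁻`,
`p ∈ P⁺`. -/
theorem gauss_decomposition_of_Go (n k : ℕ) (hk : 0 < k) (D : HTLData n)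
    (hdeg : ∀ j, (D.q j).natDegree ≤ k)  -- `k` bounds the pole order
    (hpole : k = 1 ∨ ∃ j, (D.q j).natDegree = k)  -- and `k` is the pole order
    (ord : ℕ → Fin n → ℕ) (hordfam : D.IsOrderingFamily k ord)
    (g : Fin k → Matrix (Fin n) (Fin n) ℂ) (hg : g ⟨0, hk⟩ = 1) :
    ∃! up : (Fin k → Matrix (Fin n) (Fin n) ℂ) × (Fin k → Matrix (Fin n) (Fin n) ℂ),
      UminusMem hk ord up.1 ∧ PplusMem hk ord up.2 ∧ truncMul up.1 up.2 = g := by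
  obtain ⟨up, hup, huniq⟩ := good_exists_unique hk ord g hg k
  obtain ⟨h1, h2, h3, h4⟩ := hup
  refine ⟨up, ⟨⟨(h1 hk).1, fun s hs => (h2 s hs s.isLt).1⟩,
    ⟨(h1 hk).2, fun s hs hle => (h2 s hs s.isLt).2 hle⟩,
    funext fun s => h4 s s.isLt⟩, ?_⟩
  intro y hy
  exact huniq y ⟨fun _ => ⟨hy.1.1, hy.2.1.1⟩,
    fun s hs _ => ⟨hy.1.2 s hs, fun hle => hy.2.1.2 s hs hle⟩,
    fun s hsk => absurd s.isLt (by omega),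
    fun s _ => congrFun hy.2.2 s⟩
end

section
/- Let B = (B^{(0)},…,B^{(p)}), Q, α, λ, L be as in the context. Then there exists v = (v_1,…,v_p) ∈ ℂ^p such that, setting v₀ := −Σ_{i=1}^p v_i and v̄ ∈ ℂ^{Q₀} by v̄_{[i,j]} := v_i for i ∈ I_irr\{0}, v̄_{[0,j]} := v₀ + Σ_{k∈I_reg} v_k, v̄_{[i,j,k]} := 0, one has: M_{λ+v̄}(Q,α)^dif equals the quotient by G of the set of x ∈ μ⁻¹(λ+v̄) that are irreducible (not merely L-irreducible) and satisfy the determinant conditions; in particular M_{λ+v̄}(Q,α)^dif is contained in M^reg_{λ+v̄}(Q,α) := μ⁻¹(λ+v̄)^irr/G. -/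
/-!
STATEMENT 9: there is a shift `v ∈ ℂ^p` such that on `μ⁻¹(λ+v̄)`, `L`-irreducibility
(with the determinant conditions) coincides with irreducibility; in particular
`M_{λ+v̄}(Q,α)^dif ⊆ M^reg_{λ+v̄}(Q,α)`.
-/
open Matrix BigOperators

noncomputable section

/-- A Laurent series is a principal part (class representative in `ℂ((z))/ℂ[[z]]`). -/
def IsPrincipal (f : LaurentSeries ℂ) : Prop := ∀ k : ℤ, 0 ≤ k → f.coeff k = 0

/-- `GL(n, ℂ)`. -/
abbrev GLc (n : ℕ) := (Matrix (Fin n) (Fin n) ℂ)ˣ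

/-- The inclusion `GL(n, ℂ) → GL(n, ℂ((z)))`. -/
def glC {n : ℕ} : GLc n →* (Matrix (Fin n) (Fin n) (LaurentSeries ℂ))ˣ :=
  Units.map ((HahnSeries.C : ℂ →+* LaurentSeries ℂ).mapMatrix).toMonoidHom

/-- Conjugation of a matrix of Laurent series by `X ∈ GL(n, ℂ[[z]])`. -/
def conjPS {n : ℕ} (X : GLps n) (B : Matrix (Fin n) (Fin n) (LaurentSeries ℂ)) :
    Matrix (Fin n) (Fin n) (LaurentSeries ℂ) :=
  (glMap X).val * B * ((glMap X)⁻¹).val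

/-- Conjugation by a constant invertible matrix. -/
def conjC {n : ℕ} (g : GLc n) (B : Matrix (Fin n) (Fin n) (LaurentSeries ℂ)) :
    Matrix (Fin n) (Fin n) (LaurentSeries ℂ) :=
  (glC g).val * B * ((glC g)⁻¹).val

/-- The matrix of `z^k`-coefficients of a matrix of Laurent series. -/
def coeffM {n : ℕ} (M : Matrix (Fin n) (Fin n) (LaurentSeries ℂ)) (k : ℤ) :
    Matrix (Fin n) (Fin n) ℂ := fun a b => (M a b).coeff k

/-! ### Finite quivers and representations of double quivers -/

/-- A finite quiver. -/
structure FinQuiver where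
  V : Type
  E : Type
  [fintypeV : Fintype V]
  [decEqV : DecidableEq V]
  [fintypeE : Fintype E]
  [decEqE : DecidableEq E]
  src : E → V
  tgt : E → V

attribute [instance] FinQuiver.fintypeV FinQuiver.decEqV FinQuiver.fintypeE FinQuiver.decEqE

namespace FinQuiver

variable (Q : FinQuiver) (α : Q.V → ℕ)

/-- The representation space of the double quiver `Q̄` with dimension vector `α`. -/
abbrev Rep :=
  ∀ e : Q.E, Matrix (Fin (α (Q.tgt e))) (Fin (α (Q.src e))) ℂ ×
    Matrix (Fin (α (Q.src e))) (Fin (α (Q.tgt e))) ℂ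

/-- The group `G = ∏_{a ∈ Q₀} GL(α_a, ℂ)`. -/
abbrev GGroup := ∀ a : Q.V, (Matrix (Fin (α a)) (Fin (α a)) ℂ)ˣ

variable {Q α}

/-- The action of `G` on `Rep(Q̄,α)`. -/
def act (g : Q.GGroup α) (x : Q.Rep α) : Q.Rep α := fun e =>
  ((g (Q.tgt e)).val * (x e).1 * ((g (Q.src e))⁻¹).val,
   (g (Q.src e)).val * (x e).2 * ((g (Q.tgt e))⁻¹).val)

/-- The moment map `μ`. -/
def mu (x : Q.Rep α) (a : Q.V) : Matrix (Fin (α a)) (Fin (α a)) ℂ :=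
  (∑ e : Q.E, if h : Q.tgt e = a then
      (Matrix.reindex (finCongr (congrArg α h)) (finCongr (congrArg α h))
        ((x e).1 * (x e).2)) else 0)
  - ∑ e : Q.E, if h : Q.src e = a then
      (Matrix.reindex (finCongr (congrArg α h)) (finCongr (congrArg α h))
        ((x e).2 * (x e).1)) else 0

/-- A collection of subspaces invariant under all the components of `x`. -/
def InvFamily (x : Q.Rep α) (W : ∀ a : Q.V, Submodule ℂ (Fin (α a) → ℂ)) : Prop :=
  ∀ e : Q.E, (∀ v ∈ W (Q.src e), (x e).1.mulVec v ∈ W (Q.tgt e)) ∧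
             (∀ v ∈ W (Q.tgt e), (x e).2.mulVec v ∈ W (Q.src e))

/-- `x` is an irreducible representation of the double quiver. -/
def Irred (x : Q.Rep α) : Prop :=
  ∀ W : ∀ a : Q.V, Submodule ℂ (Fin (α a) → ℂ),
    InvFamily x W → (∀ a, W a = ⊥) ∨ (∀ a, W a = ⊤)

end FinQuiver

/-! ### The data of a collection of HTL normal forms -/

/-- A collection `B = (B^{(0)}, …, B^{(p)})` of unramified HTL normal forms of size `n`,
`B^{(i)} = diag(q^{(i)}_j(z⁻¹)I_{n^{(i)}_j} + R^{(i)}_j z⁻¹)_{j=1,…,m^{(i)}}`,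
together with eigenvalue data `ξ^{[i,j]}_1, …, ξ^{[i,j]}_{e_{[i,j]}}` with
`∏_k (R^{(i)}_j − ξ^{[i,j]}_k) = 0`. -/
structure ConnData where
  n : ℕ
  hn : 0 < n
  p : ℕ
  m : Fin (p+1) → ℕ
  hm : ∀ i, 0 < m i
  nb : (i : Fin (p+1)) → Fin (m i) → ℕ
  hnb : ∀ i j, 0 < nb i j
  hsum : ∀ i, ∑ j, nb i j = n
  q : (i : Fin (p+1)) → Fin (m i) → Polynomial ℂ
  hq0 : ∀ i j, (q i j).coeff 0 = 0
  hq1 : ∀ i j, (q i j).coeff 1 = 0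
  hqd : ∀ i (j j' : Fin (m i)), j ≠ j' → q i j ≠ q i j'
  hreg : ∀ i, i ≠ 0 → m i = 1 → ∀ j, q i j = 0
  R : (i : Fin (p+1)) → (j : Fin (m i)) → Matrix (Fin (nb i j)) (Fin (nb i j)) ℂ
  e : (i : Fin (p+1)) → Fin (m i) → ℕ
  he : ∀ i j, 0 < e i j
  xi : (i : Fin (p+1)) → (j : Fin (m i)) → Fin (e i j) → ℂ
  hxi : ∀ i j,
    (List.ofFn fun k => R i j - xi i j k • (1 : Matrix (Fin (nb i j)) (Fin (nb i j)) ℂ)).prod = 0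

namespace ConnData

variable (D : ConnData)

/-- `i ∈ I_irr`. -/
def isIrr (i : Fin (D.p+1)) : Prop := 1 < D.m i ∨ i = 0

instance : DecidablePred D.isIrr := fun _ => inferInstanceAs (Decidable (_ ∨ _))

/-- The set of indices of irregular type. -/
abbrev IrrIdx := {i : Fin (D.p+1) // D.isIrr i}

/-- The set of indices of irregular type other than `0`. -/
abbrev IrrNz := {i : Fin (D.p+1) // D.isIrr i ∧ i ≠ 0}

/-- The unique block index at a point. -/
def j1 (i : Fin (D.p+1)) : Fin (D.m i) := ⟨0, D.hm i⟩

/-- `d_i(j,j') = deg(q^{(i)}_j − q^{(i)}_{j'}) − 2`. -/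
def dd (i : Fin (D.p+1)) (j j' : Fin (D.m i)) : ℕ := ((D.q i j) - (D.q i j')).natDegree - 2

/-- The vertex set of the quiver: mid vertices `[i,j]` (for `i ∈ I_irr`) and leg
vertices `[i,j,k]`, `1 ≤ k ≤ e_{[i,j]}−1`. -/
abbrev Vq :=
  (Σ i : D.IrrIdx, Fin (D.m i.1)) ⊕ (Σ i : Fin (D.p+1), Σ j : Fin (D.m i), Fin (D.e i j - 1))

/-- The vertex `[i,j]`, `i ∈ I_irr`. -/
def vmid (i : D.IrrIdx) (j : Fin (D.m i.1)) : D.Vq := Sum.inl ⟨i, j⟩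

/-- `0 ∈ I_irr`. -/
def irr0 : D.IrrIdx := ⟨0, Or.inr rfl⟩

/-- The vertex `[0,j]`. -/
def vmid0 (j : Fin (D.m 0)) : D.Vq := Sum.inl ⟨D.irr0, j⟩

/-- The leg vertex `[i,j,k+1]` (`k` is 0-based). -/
def vleg (i : Fin (D.p+1)) (j : Fin (D.m i)) (k : Fin (D.e i j - 1)) : D.Vq :=
  Sum.inr ⟨i, j, k⟩

/-- Arrows `[0,j] → [i,j']`, `i ∈ I_irr \ {0}`. -/
abbrev Arr1 := Fin (D.m 0) × (Σ i : D.IrrNz, Fin (D.m i.1))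
/-- `d_i(j,j')` arrows `[i,j] → [i,j']` for `i ∈ I_irr`, `j < j'`. -/
abbrev Arr2 := Σ i : D.IrrIdx, Σ jj : {x : Fin (D.m i.1) × Fin (D.m i.1) // x.1 < x.2},
  Fin (D.dd i.1 jj.1.1 jj.1.2)
/-- Leg arrows `[i,j,k] → [i,j,k−1]`, `k ≥ 2`. -/
abbrev Arr3 := Σ i : Fin (D.p+1), Σ j : Fin (D.m i), Fin (D.e i j - 2)
/-- Arrows `[i,j,1] → [i,j]`, `i ∈ I_irr`. -/
abbrev Arr4 := Σ i : D.IrrIdx, {j : Fin (D.m i.1) // 2 ≤ D.e i.1 j}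
/-- Arrows `[i,1,1] → [0,j]`, `i ∈ I_reg`. -/
abbrev Arr5 := {i : Fin (D.p+1) // ¬ D.isIrr i ∧ 2 ≤ D.e i (D.j1 i)} × Fin (D.m 0)

/-- The arrow set of the quiver. -/
abbrev Arr := D.Arr1 ⊕ D.Arr2 ⊕ D.Arr3 ⊕ D.Arr4 ⊕ D.Arr5

/-- Sources of arrows. -/
def qsrc : D.Arr → D.Vq
  | .inl (j, ⟨_, _⟩) => D.vmid0 j
  | .inr (.inl ⟨i, jj, _⟩) => D.vmid i jj.1.1
  | .inr (.inr (.inl ⟨i, j, t⟩)) => D.vleg i j ⟨t.1 + 1, by have := t.isLt; omega⟩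
  | .inr (.inr (.inr (.inl ⟨i, j⟩))) => D.vleg i.1 j.1 ⟨0, by have := j.2; omega⟩
  | .inr (.inr (.inr (.inr (i, _)))) => D.vleg i.1 (D.j1 i.1) ⟨0, by have := i.2.2; omega⟩

/-- Targets of arrows. -/
def qtgt : D.Arr → D.Vq
  | .inl (_, ⟨i, j'⟩) => D.vmid ⟨i.1, i.2.1⟩ j'
  | .inr (.inl ⟨i, jj, _⟩) => D.vmid i jj.1.2
  | .inr (.inr (.inl ⟨i, j, t⟩)) => D.vleg i j ⟨t.1, by have := t.isLt; omega⟩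
  | .inr (.inr (.inr (.inl ⟨i, j⟩))) => D.vmid i j.1
  | .inr (.inr (.inr (.inr (_, j)))) => D.vmid0 j

/-- The quiver `Q` associated with `B`. -/
def quiv : FinQuiver := FinQuiver.mk (V := D.Vq) (E := D.Arr) D.qsrc D.qtgt

/-- The dimension vector `α`. -/
def alphaV : D.Vq → ℕ
  | .inl ⟨i, j⟩ => D.nb i.1 j
  | .inr ⟨i, j, k⟩ =>
      ((List.ofFn fun l : Fin (k.1 + 1) =>
          D.R i j - D.xi i j ⟨l.1, by have := l.isLt; have := k.isLt; omega⟩ •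
            (1 : Matrix (Fin (D.nb i j)) (Fin (D.nb i j)) ℂ)).prod).rank

/-- The dimension vector `α` as an integral vector. -/
def alphaZ : D.Vq → ℤ := fun a => (D.alphaV a : ℤ)

/-- `Σ_{i ∈ I_reg} ξ^{[i,1]}_1`. -/
def regSumXi : ℂ :=
  ∑ i : Fin (D.p+1), if D.isIrr i then 0 else D.xi i (D.j1 i) ⟨0, D.he _ _⟩

/-- The parameter `λ`. -/
def lamV : D.Vq → ℂ
  | .inl ⟨⟨i, _⟩, j⟩ =>
      if h : i = 0 then - D.xi 0 (h ▸ j) ⟨0, D.he _ _⟩ - D.regSumXi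
      else - D.xi i j ⟨0, D.he _ _⟩
  | .inr ⟨i, j, k⟩ =>
      D.xi i j ⟨k.1, by have := k.isLt; omega⟩ - D.xi i j ⟨k.1 + 1, by have := k.isLt; omega⟩

/-- The lattice `L ⊆ ℤ^{Q₀}`. -/
def latt : Set (D.Vq → ℤ) :=
  {β | ∀ i : D.IrrNz,
    (∑ j : Fin (D.m 0), β (D.vmid0 j)) = ∑ j : Fin (D.m i.1), β (D.vmid ⟨i.1, i.2.1⟩ j)}

/-- `L`-irreducibility of a representation: no nontrivial proper invariant collection
of subspaces whose dimension vector lies in `L`. -/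
def LIrred {αd : D.Vq → ℕ} (x : D.quiv.Rep αd) : Prop :=
  ∀ W : ∀ a : D.Vq, Submodule ℂ (Fin (αd a) → ℂ),
    FinQuiver.InvFamily x W →
    (fun a => (Module.finrank ℂ (W a) : ℤ)) ∈ D.latt →
    (∀ a, W a = ⊥) ∨ (∀ a, W a = ⊤)

/-- The block matrix formed by the components of `x` along the arrows `[0,j] → [i,j']`
for a fixed `i ∈ I_irr \ {0}`. -/
def detMat {αd : D.Vq → ℕ} (x : D.quiv.Rep αd) (i : D.IrrNz) :
    Matrix (Σ j' : Fin (D.m i.1), Fin (αd (D.vmid ⟨i.1, i.2.1⟩ j')))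
      (Σ j : Fin (D.m 0), Fin (αd (D.vmid0 j))) ℂ :=
  fun rc cc => (x (Sum.inl (cc.1, ⟨i, rc.1⟩))).1 rc.2 cc.2

/-- The determinant conditions: the block matrices along the arrows `[0,j] → [i,j']`
are invertible for all `i ∈ I_irr \ {0}`. -/
def DetCond {αd : D.Vq → ℕ} (x : D.quiv.Rep αd) : Prop :=
  ∀ i : D.IrrNz, Function.Bijective (Matrix.mulVecLin (D.detMat x i))

/-- The set underlying `M_λ(Q,α)^dif`. -/
def MdifSub (lam : D.Vq → ℂ) (αd : D.Vq → ℕ) :=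
  {x : D.quiv.Rep αd //
    (∀ a, FinQuiver.mu x a = lam a • (1 : Matrix (Fin (αd a)) (Fin (αd a)) ℂ)) ∧
    D.LIrred x ∧ D.DetCond x}

/-- `M_λ(Q,α)^dif`: the quotient of the `L`-irreducible locus (with the determinant
conditions) of `μ⁻¹(λ)` by `G`. -/
def Mdif (lam : D.Vq → ℂ) (αd : D.Vq → ℕ) :=
  Quot (fun x y : D.MdifSub lam αd => ∃ g : D.quiv.GGroup αd, FinQuiver.act g x.1 = y.1)

/-- Identification of the disjoint union of the blocks of `B^{(i)}` with `Fin n`. -/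
def sigmaEquiv (i : Fin (D.p+1)) : (Σ j : Fin (D.m i), Fin (D.nb i j)) ≃ Fin D.n :=
  Fintype.equivFinOfCardEq (by simpa using D.hsum i)

/-- The matrix of the HTL normal form `B^{(i)}`. -/
def BmatAt (i : Fin (D.p+1)) : Matrix (Fin D.n) (Fin D.n) (LaurentSeries ℂ) :=
  Matrix.reindex (D.sigmaEquiv i) (D.sigmaEquiv i)
    (Matrix.blockDiagonal' fun j =>
      (fun a b => (if a = b then polyZinv (D.q i j) else 0) +
        HahnSeries.single (-1 : ℤ) (D.R i j a b)))

/-- Membership in the moduli space data: a tuple of principal parts, lying in the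
truncated orbits of the `B^{(i)}`, with vanishing total residue, which is
irreducible. -/
def MBMem (A : Fin (D.p+1) → Matrix (Fin D.n) (Fin D.n) (LaurentSeries ℂ)) : Prop :=
  (∀ i a b, IsPrincipal (A i a b)) ∧
  (∀ i, ∃ X : GLps D.n, ∀ a b, Tame ((A i - conjPS X (D.BmatAt i)) a b)) ∧
  (∑ i, coeffM (A i) (-1)) = 0 ∧
  (∀ W : Submodule ℂ (Fin D.n → ℂ),
    (∀ i (k : ℤ), ∀ v ∈ W, (coeffM (A i) k).mulVec v ∈ W) → W = ⊥ ∨ W = ⊤)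

/-- The set underlying the moduli space `M(B)`. -/
def MBSub := {A : Fin (D.p+1) → Matrix (Fin D.n) (Fin D.n) (LaurentSeries ℂ) // D.MBMem A}

/-- The moduli space `M(B)` of stable meromorphic connections on trivial bundles with
formal types `B`: the quotient by simultaneous `GL(n,ℂ)`-conjugation. -/
def MB := Quot (fun A A' : D.MBSub => ∃ g : GLc D.n, ∀ i, conjC g (A.1 i) = A'.1 i)

/-- The shift `v̄ ∈ ℂ^{Q₀}` attached to `v = (v_1,…,v_p) ∈ ℂ^p`:
`v̄_{[i,j]} = v_i` for `i ∈ I_irr \ {0}`, `v̄_{[0,j]} = v_0 + Σ_{k ∈ I_reg} v_k`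
(where `v_0 := −Σ_{i=1}^p v_i`), and `v̄ = 0` on leg vertices. -/
def vbar (v : Fin D.p → ℂ) : D.Vq → ℂ
  | .inl ⟨⟨i, _⟩, _⟩ =>
      if h : i = 0 then
        (- ∑ i' : Fin D.p, v i') + ∑ i' : Fin D.p, (if ¬ D.isIrr i'.succ then v i' else 0)
      else v (i.pred h)
  | .inr _ => 0

end ConnData

end



/-! ### Auxiliary lemmas for Statement 9 -/

section Aux
open Matrix

lemma mat_ext_mulVec {m p : Type*} [Fintype m] [Fintype p] [DecidableEq p]
    (M N : Matrix m p ℂ) (h : ∀ v, M.mulVec v = N.mulVec v) : M = N := by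
  ext i j
  simpa using congrFun (h (Pi.single j 1)) i

lemma exists_proj {m : ℕ} (W : Submodule ℂ (Fin m → ℂ)) :
    ∃ P : Matrix (Fin m) (Fin m) ℂ,
      (∀ v, P.mulVec v ∈ W) ∧ (∀ v ∈ W, P.mulVec v = v) ∧
      P.trace = (Module.finrank ℂ W : ℂ) := by
  obtain ⟨W', hW'⟩ := Submodule.exists_isCompl W
  set f : (Fin m → ℂ) →ₗ[ℂ] (Fin m → ℂ) := W.subtype ∘ₗ (W.projectionOnto W' hW') with hf
  have hmv : ∀ v, (LinearMap.toMatrix' f).mulVec v = f v := by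
    intro v; rw [← Matrix.toLin'_apply, Matrix.toLin'_toMatrix']
  refine ⟨LinearMap.toMatrix' f, ?_, ?_, ?_⟩
  · intro v; rw [hmv]; exact (W.projectionOnto W' hW' v).2
  · intro v hv; rw [hmv]
    show (W.subtype) (W.projectionOnto W' hW' v) = v
    rw [show v = ((⟨v, hv⟩ : W) : Fin m → ℂ) from rfl,
      Submodule.projectionOnto_apply_left hW' ⟨v, hv⟩]
    rfl
  · have h1 : (LinearMap.toMatrix' f).trace = LinearMap.trace ℂ _ f := by
      rw [LinearMap.trace_eq_matrix_trace ℂ (Pi.basisFun ℂ (Fin m)) f,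
        LinearMap.toMatrix_eq_toMatrix']
    rw [h1, hf, LinearMap.trace_comp_comm']
    have h2 : (W.projectionOnto W' hW') ∘ₗ W.subtype = LinearMap.id := by
      ext w; simp [Submodule.projectionOnto_apply_left]
    rw [h2, LinearMap.trace_id]

lemma col_lemma {m t : ℕ} (A : Matrix (Fin t) (Fin m) ℂ) (P : Matrix (Fin m) (Fin m) ℂ)
    (Pt : Matrix (Fin t) (Fin t) ℂ) (Ws : Submodule ℂ (Fin m → ℂ)) (Wt : Submodule ℂ (Fin t → ℂ))
    (hP : ∀ v, P.mulVec v ∈ Ws) (hPt : ∀ v ∈ Wt, Pt.mulVec v = v)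
    (hA : ∀ v ∈ Ws, A.mulVec v ∈ Wt) : Pt * (A * P) = A * P := by
  apply mat_ext_mulVec
  intro v
  rw [← Matrix.mulVec_mulVec, ← Matrix.mulVec_mulVec]
  exact hPt _ (hA _ (hP v))

lemma trace_swap {m t : ℕ} (A : Matrix (Fin t) (Fin m) ℂ) (B : Matrix (Fin m) (Fin t) ℂ)
    (Ps : Matrix (Fin m) (Fin m) ℂ) (Pt : Matrix (Fin t) (Fin t) ℂ)
    (Ws : Submodule ℂ (Fin m → ℂ)) (Wt : Submodule ℂ (Fin t → ℂ))
    (hPs1 : ∀ v, Ps.mulVec v ∈ Ws) (hPs2 : ∀ v ∈ Ws, Ps.mulVec v = v)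
    (hPt1 : ∀ v, Pt.mulVec v ∈ Wt) (hPt2 : ∀ v ∈ Wt, Pt.mulVec v = v)
    (hA : ∀ v ∈ Ws, A.mulVec v ∈ Wt) (hB : ∀ v ∈ Wt, B.mulVec v ∈ Ws) :
    (A * B * Pt).trace = (B * A * Ps).trace := by
  have h1 : Ps * (B * Pt) = B * Pt := col_lemma B Pt Ps Wt Ws hPt1 hPs2 hB
  have h2 : Pt * (A * Ps) = A * Ps := col_lemma A Ps Pt Ws Wt hPs1 hPt2 hA
  have e1 : A * B * Pt = (A * Ps) * (B * Pt) :=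
    calc A * B * Pt = A * (B * Pt) := Matrix.mul_assoc A B Pt
    _ = A * (Ps * (B * Pt)) := by rw [h1]
    _ = (A * Ps) * (B * Pt) := (Matrix.mul_assoc A Ps (B * Pt)).symm
  have e2 : B * A * Ps = (B * Pt) * (A * Ps) :=
    calc B * A * Ps = B * (A * Ps) := Matrix.mul_assoc B A Ps
    _ = B * (Pt * (A * Ps)) := by rw [h2]
    _ = (B * Pt) * (A * Ps) := (Matrix.mul_assoc B Pt (A * Ps)).symm
  rw [e1, e2, Matrix.trace_mul_comm]

lemma trace_mu_mul (Q : FinQuiver) (α : Q.V → ℕ) (x : Q.Rep α)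
    (P : ∀ a, Matrix (Fin (α a)) (Fin (α a)) ℂ) :
    ∑ a, Matrix.trace (FinQuiver.mu x a * P a)
      = ∑ e, (Matrix.trace ((x e).1 * (x e).2 * P (Q.tgt e))
          - Matrix.trace ((x e).2 * (x e).1 * P (Q.src e))) := by
  have hterm : ∀ a, Matrix.trace (FinQuiver.mu x a * P a)
      = ∑ e, (Matrix.trace ((if h : Q.tgt e = a then
            (Matrix.reindex (finCongr (congrArg α h)) (finCongr (congrArg α h))
              ((x e).1 * (x e).2)) else 0) * P a)
        - Matrix.trace ((if h : Q.src e = a then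
            (Matrix.reindex (finCongr (congrArg α h)) (finCongr (congrArg α h))
              ((x e).2 * (x e).1)) else 0) * P a)) := by
    intro a
    rw [FinQuiver.mu, Matrix.sub_mul, Matrix.trace_sub, Finset.sum_mul, Finset.sum_mul,
      Matrix.trace_sum, Matrix.trace_sum, Finset.sum_sub_distrib]
  calc ∑ a, Matrix.trace (FinQuiver.mu x a * P a)
      = ∑ a, ∑ e, (Matrix.trace ((if h : Q.tgt e = a then
            (Matrix.reindex (finCongr (congrArg α h)) (finCongr (congrArg α h))
              ((x e).1 * (x e).2)) else 0) * P a)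
        - Matrix.trace ((if h : Q.src e = a then
            (Matrix.reindex (finCongr (congrArg α h)) (finCongr (congrArg α h))
              ((x e).2 * (x e).1)) else 0) * P a)) := Finset.sum_congr rfl (fun a _ => hterm a)
    _ = ∑ e, ∑ a, (Matrix.trace ((if h : Q.tgt e = a then
            (Matrix.reindex (finCongr (congrArg α h)) (finCongr (congrArg α h))
              ((x e).1 * (x e).2)) else 0) * P a)
        - Matrix.trace ((if h : Q.src e = a then
            (Matrix.reindex (finCongr (congrArg α h)) (finCongr (congrArg α h))
              ((x e).2 * (x e).1)) else 0) * P a)) := Finset.sum_comm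
    _ = ∑ e, (Matrix.trace ((x e).1 * (x e).2 * P (Q.tgt e))
          - Matrix.trace ((x e).2 * (x e).1 * P (Q.src e))) := by
        refine Finset.sum_congr rfl (fun e _ => ?_)
        rw [Finset.sum_sub_distrib]
        congr 1
        · rw [Finset.sum_eq_single (Q.tgt e)]
          · rw [dif_pos rfl]; rfl
          · intro b _ hb
            rw [dif_neg (fun h => hb h.symm), Matrix.zero_mul, Matrix.trace_zero]
          · intro h; exact absurd (Finset.mem_univ _) h
        · rw [Finset.sum_eq_single (Q.src e)]
          · rw [dif_pos rfl]; rfl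
          · intro b _ hb
            rw [dif_neg (fun h => hb h.symm), Matrix.zero_mul, Matrix.trace_zero]
          · intro h; exact absurd (Finset.mem_univ _) h

lemma sum_scalar_finrank_eq_zero (Q : FinQuiver) (α : Q.V → ℕ) (x : Q.Rep α)
    (c : Q.V → ℂ) (hmu : ∀ a, FinQuiver.mu x a = c a • (1 : Matrix (Fin (α a)) (Fin (α a)) ℂ))
    (W : ∀ a, Submodule ℂ (Fin (α a) → ℂ)) (hW : FinQuiver.InvFamily x W) :
    ∑ a, c a * (Module.finrank ℂ (W a) : ℂ) = 0 := by
  choose P hP1 hP2 hP3 using fun a => exists_proj (W a)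
  have way1 : ∀ a, Matrix.trace (FinQuiver.mu x a * P a)
      = c a * (Module.finrank ℂ (W a) : ℂ) := by
    intro a
    rw [hmu a, Matrix.smul_mul, Matrix.one_mul, Matrix.trace_smul, hP3 a, smul_eq_mul]
  have way2 := trace_mu_mul Q α x P
  have zero : ∑ e, (Matrix.trace ((x e).1 * (x e).2 * P (Q.tgt e))
          - Matrix.trace ((x e).2 * (x e).1 * P (Q.src e))) = 0 := by
    refine Finset.sum_eq_zero (fun e _ => sub_eq_zero.2 ?_)
    exact trace_swap (x e).1 (x e).2 (P (Q.src e)) (P (Q.tgt e)) (W (Q.src e)) (W (Q.tgt e))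
      (hP1 _) (hP2 _) (hP1 _) (hP2 _) (hW e).1 (hW e).2
  rw [← Finset.sum_congr rfl (fun a _ => way1 a), way2, zero]

lemma digit_lemma (n : ℕ) : ∀ (p : ℕ) (c : Fin p → ℤ), (∀ i, |c i| ≤ n) →
    (∑ i, c i * ((n : ℤ) + 1) ^ (i : ℕ)) = 0 → ∀ i, c i = 0 := by
  intro p
  induction p with
  | zero => intro c _ _ i; exact i.elim0
  | succ p ih =>
    intro c hb hsum
    rw [Fin.sum_univ_succ] at hsum
    have hd : ((n : ℤ) + 1) ∣ ∑ i : Fin p, c i.succ * ((n : ℤ) + 1) ^ (i.succ : ℕ) := by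
      refine Finset.dvd_sum (fun i _ => Dvd.dvd.mul_left ?_ _)
      exact dvd_pow_self _ (by simp [Fin.val_succ])
    have hc0 : c 0 = 0 := by
      have hdvd : ((n : ℤ) + 1) ∣ c 0 := by
        have : c 0 = -(∑ i : Fin p, c i.succ * ((n : ℤ) + 1) ^ (i.succ : ℕ)) := by
          have h0 : ((0 : Fin (p+1)) : ℕ) = 0 := rfl
          rw [h0] at hsum; linarith
        rw [this]; exact hd.neg_right
      refine Int.eq_zero_of_abs_lt_dvd hdvd ?_
      have := hb 0; omega
    have hrest : (∑ i : Fin p, c i.succ * ((n : ℤ) + 1) ^ (i : ℕ)) = 0 := by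
      have hpos : ((n : ℤ) + 1) ≠ 0 := by positivity
      have hmul : ((n : ℤ) + 1) * (∑ i : Fin p, c i.succ * ((n : ℤ) + 1) ^ (i : ℕ)) = 0 := by
        rw [Finset.mul_sum]
        rw [hc0, zero_mul, zero_add] at hsum
        rw [← hsum]
        refine Finset.sum_congr rfl (fun i _ => ?_)
        rw [Fin.val_succ, pow_succ]
        ring
      exact (mul_eq_zero.1 hmul).resolve_left hpos
    intro i
    refine Fin.cases hc0 (fun i => ih (fun j => c j.succ) (fun j => hb j.succ) hrest i) i

end Aux

namespace ConnData

variable (D : ConnData)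

/-- The base direction `w_i = (n+1)^i`. -/
def wfun : Fin D.p → ℂ := fun i => ((D.n : ℂ) + 1) ^ (i : ℕ)

/-- The integer sum `S_i(β) = Σ_j β_{[i,j]}`. -/
def ScZ (β : D.Vq → ℕ) (i : D.IrrIdx) : ℤ := ∑ j, (β (D.vmid i j) : ℤ)

/-- The coefficient of `w_i` in the pairing `⟨v̄(w), β⟩`. -/
def cInt (β : D.Vq → ℕ) (i : Fin D.p) : ℤ :=
  if h : D.isIrr i.succ then D.ScZ β ⟨i.succ, h⟩ - D.ScZ β D.irr0 else 0

lemma pairing_eq (w : Fin D.p → ℂ) (β : D.Vq → ℕ) :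
    ∑ a, D.vbar w a * (β a : ℂ) = ∑ i : Fin D.p, (D.cInt β i : ℂ) * w i := by
  classical
  set c0 : ℂ := (- ∑ i' : Fin D.p, w i')
      + ∑ i' : Fin D.p, (if ¬ D.isIrr i'.succ then w i' else 0) with hc0def
  set Vf : D.IrrIdx → ℂ := fun i => if h : i.1 = 0 then c0 else w (i.1.pred h) with hVf
  have hvbar : ∀ (i : D.IrrIdx) (j : Fin (D.m i.1)),
      D.vbar w (Sum.inl ⟨i, j⟩) = Vf i := by
    rintro ⟨⟨i, hi⟩, hirr⟩ j
    rfl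
  have step1 : ∑ a, D.vbar w a * (β a : ℂ)
      = ∑ i : D.IrrIdx, Vf i * (D.ScZ β i : ℂ) := by
    rw [Fintype.sum_sum_type]
    have hzero : ∑ y : (Σ i : Fin (D.p+1), Σ j : Fin (D.m i), Fin (D.e i j - 1)),
        D.vbar w (Sum.inr y) * (β (Sum.inr y) : ℂ) = 0 := by
      refine Finset.sum_eq_zero (fun y _ => ?_)
      have : D.vbar w (Sum.inr y) = 0 := rfl
      rw [this, zero_mul]
    rw [hzero, add_zero, ← Finset.univ_sigma_univ, Finset.sum_sigma]
    refine Finset.sum_congr rfl (fun i _ => ?_)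
    rw [ScZ, Int.cast_sum, Finset.mul_sum]
    refine Finset.sum_congr rfl (fun j _ => ?_)
    rw [hvbar i j]
    push_cast
    rfl
  rw [step1]
  set Gf : Fin (D.p+1) → ℂ :=
    fun i => if h : D.isIrr i then Vf ⟨i, h⟩ * (D.ScZ β ⟨i, h⟩ : ℂ) else 0 with hGf
  have step2 : ∑ i : D.IrrIdx, Vf i * (D.ScZ β i : ℂ) = ∑ i : Fin (D.p+1), Gf i := by
    rw [← Fintype.sum_subtype_add_sum_subtype D.isIrr Gf]
    have h2 : ∑ i : {x : Fin (D.p+1) // ¬ D.isIrr x}, Gf i.1 = 0 := by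
      refine Finset.sum_eq_zero (fun i _ => ?_)
      simp only [hGf]; exact dif_neg i.2
    rw [h2, add_zero]
    refine Finset.sum_congr rfl (fun i _ => ?_)
    simp only [hGf, dif_pos i.2]
  rw [step2, Fin.sum_univ_succ]
  have hG0 : Gf 0 = c0 * (D.ScZ β D.irr0 : ℂ) := by
    simp only [hGf]
    rw [dif_pos (show D.isIrr 0 from Or.inr rfl)]
    rfl
  have hGs : ∀ i : Fin D.p, Gf i.succ
      = if h : D.isIrr i.succ then w i * (D.ScZ β ⟨i.succ, h⟩ : ℂ) else 0 := by
    intro i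
    simp only [hGf]
    by_cases h : D.isIrr i.succ
    · rw [dif_pos h, dif_pos h]
      simp only [hVf]
      rw [dif_neg (show ¬((⟨i.succ, h⟩ : D.IrrIdx) : Fin (D.p+1)) = 0 from Fin.succ_ne_zero i)]
      rw [Fin.pred_succ]
    · rw [dif_neg h, dif_neg h]
  have hc0' : c0 = ∑ i' : Fin D.p, (-(if D.isIrr i'.succ then w i' else 0)) := by
    rw [hc0def, add_comm, ← sub_eq_add_neg, ← Finset.sum_sub_distrib]
    refine Finset.sum_congr rfl (fun i _ => ?_)
    by_cases h : D.isIrr i.succ <;> simp [h]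
  calc Gf 0 + ∑ i : Fin D.p, Gf i.succ
      = ∑ i : Fin D.p, ((-(if D.isIrr i.succ then w i else 0)) * (D.ScZ β D.irr0 : ℂ)
          + (if h : D.isIrr i.succ then w i * (D.ScZ β ⟨i.succ, h⟩ : ℂ) else 0)) := by
        rw [hG0, hc0', Finset.sum_mul, ← Finset.sum_add_distrib]
        refine congrArg _ (funext (fun i => ?_))
        rw [hGs i]
    _ = ∑ i : Fin D.p, (D.cInt β i : ℂ) * w i := by
        refine Finset.sum_congr rfl (fun i _ => ?_)
        rw [cInt]
        by_cases h : D.isIrr i.succ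
        · rw [if_pos h, dif_pos h, dif_pos h]
          push_cast
          ring
        · rw [if_neg h, dif_neg h, dif_neg h]
          push_cast
          ring

lemma ScZ_bounds (β : D.Vq → ℕ) (hβ : ∀ a, β a ≤ D.alphaV a) (i : D.IrrIdx) :
    0 ≤ D.ScZ β i ∧ D.ScZ β i ≤ D.n := by
  constructor
  · exact Finset.sum_nonneg (fun j _ => Int.natCast_nonneg _)
  · have hle : D.ScZ β i ≤ ∑ j, (D.nb i.1 j : ℤ) := by
      refine Finset.sum_le_sum (fun j _ => ?_)
      exact_mod_cast hβ (D.vmid i j)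
    have : ∑ j, (D.nb i.1 j : ℤ) = D.n := by exact_mod_cast congrArg Nat.cast (D.hsum i.1)
    omega

lemma cInt_bound (β : D.Vq → ℕ) (hβ : ∀ a, β a ≤ D.alphaV a) (i : Fin D.p) :
    |D.cInt β i| ≤ D.n := by
  rw [cInt]
  by_cases h : D.isIrr i.succ
  · rw [dif_pos h]
    have h1 := D.ScZ_bounds β hβ ⟨i.succ, h⟩
    have h2 := D.ScZ_bounds β hβ D.irr0
    rw [abs_le]; omega
  · rw [dif_neg h]; simp

lemma cInt_exists_ne (β : D.Vq → ℕ) (h : (fun a => (β a : ℤ)) ∉ D.latt) :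
    ∃ i, D.cInt β i ≠ 0 := by
  rw [latt, Set.mem_setOf_eq] at h
  push_neg at h
  obtain ⟨i, hne⟩ := h
  have hs : (i.1.pred i.2.2).succ = i.1 := Fin.succ_pred _ _
  have hirr : D.isIrr (i.1.pred i.2.2).succ := by rw [hs]; exact i.2.1
  refine ⟨i.1.pred i.2.2, ?_⟩
  rw [cInt, dif_pos hirr]
  have heq : (⟨(i.1.pred i.2.2).succ, hirr⟩ : D.IrrIdx) = ⟨i.1, i.2.1⟩ := Subtype.ext hs
  rw [heq]
  have hv0 : (∑ j : Fin (D.m 0), ((β (D.vmid0 j) : ℤ))) = D.ScZ β D.irr0 := rfl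
  have hv1 : (∑ j : Fin (D.m i.1), ((β (D.vmid ⟨i.1, i.2.1⟩ j) : ℤ))) = D.ScZ β ⟨i.1, i.2.1⟩ := rfl
  intro hcontr
  apply hne
  rw [hv0, hv1]
  linarith [hcontr]

lemma pairing_w_ne_zero (β : D.Vq → ℕ) (hβ : ∀ a, β a ≤ D.alphaV a)
    (h : (fun a => (β a : ℤ)) ∉ D.latt) :
    ∑ a, D.vbar D.wfun a * (β a : ℂ) ≠ 0 := by
  rw [D.pairing_eq D.wfun β]
  have hz : ∑ i : Fin D.p, (D.cInt β i : ℂ) * D.wfun i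
      = ((∑ i : Fin D.p, D.cInt β i * ((D.n : ℤ) + 1) ^ (i : ℕ) : ℤ) : ℂ) := by
    push_cast [wfun]
    rfl
  rw [hz]
  rw [Ne, Int.cast_eq_zero]
  intro hzero
  obtain ⟨i, hi⟩ := D.cInt_exists_ne β h
  exact hi (digit_lemma D.n D.p (D.cInt β) (D.cInt_bound β hβ) hzero i)

lemma vbar_smul (t : ℂ) (w : Fin D.p → ℂ) (a : D.Vq) :
    D.vbar (fun i => t * w i) a = t * D.vbar w a := by
  rcases a with ⟨⟨i, hi⟩, j⟩ | y
  · show (if h : i = 0 then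
        (- ∑ i' : Fin D.p, t * w i')
          + ∑ i' : Fin D.p, (if ¬ D.isIrr i'.succ then t * w i' else 0)
      else t * w (i.pred h)) = t * (if h : i = 0 then
        (- ∑ i' : Fin D.p, w i')
          + ∑ i' : Fin D.p, (if ¬ D.isIrr i'.succ then w i' else 0)
      else w (i.pred h))
    by_cases h : i = 0
    · rw [dif_pos h, dif_pos h, mul_add, mul_neg, Finset.mul_sum, Finset.mul_sum]
      congr 1
      refine congrArg _ (funext (fun i' => ?_))
      by_cases h' : D.isIrr i'.succ <;> simp [h']
    · rw [dif_neg h, dif_neg h]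
  · show (0 : ℂ) = t * 0
    rw [mul_zero]

lemma exists_good_t : ∃ t : ℂ, ∀ β : D.Vq → ℕ, (∀ a, β a ≤ D.alphaV a) →
    (fun a => (β a : ℤ)) ∉ D.latt →
    (∑ a, D.lamV a * (β a : ℂ)) + t * ∑ a, D.vbar D.wfun a * (β a : ℂ) ≠ 0 := by
  classical
  set S : Finset (D.Vq → ℕ) := Fintype.piFinset fun a => Finset.range (D.alphaV a + 1) with hS
  set bad : Finset ℂ := S.image fun β =>
    -(∑ a, D.lamV a * (β a : ℂ)) / (∑ a, D.vbar D.wfun a * (β a : ℂ)) with hbad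
  obtain ⟨t, ht⟩ := Infinite.exists_notMem_finset bad
  refine ⟨t, fun β hβ hβl h0 => ?_⟩
  have hw : (∑ a, D.vbar D.wfun a * (β a : ℂ)) ≠ 0 := D.pairing_w_ne_zero β hβ hβl
  apply ht
  rw [hbad, Finset.mem_image]
  refine ⟨β, ?_, ?_⟩
  · rw [hS, Fintype.mem_piFinset]
    exact fun a => Finset.mem_range.2 (Nat.lt_succ_of_le (hβ a))
  · rw [div_eq_iff hw]
    linear_combination -h0

end ConnData

open ConnData FinQuiver in
/-- STATEMENT 9. -/
theorem exists_shift_Lirreducible_iff_irreducible (D : ConnData) :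
    ∃ v : Fin D.p → ℂ,
      ∀ x : D.quiv.Rep D.alphaV,
        (∀ a, FinQuiver.mu x a =
          (D.lamV a + D.vbar v a) • (1 : Matrix (Fin (D.alphaV a)) (Fin (D.alphaV a)) ℂ)) →
        ((D.LIrred x ∧ D.DetCond x) ↔ (FinQuiver.Irred x ∧ D.DetCond x)) := by
  classical
  obtain ⟨t, ht⟩ := D.exists_good_t
  refine ⟨fun i => t * D.wfun i, fun x hmu => ?_⟩
  constructor
  · rintro ⟨hL, hdet⟩
    refine ⟨fun W hW => ?_, hdet⟩
    apply hL W hW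
    by_contra hβ
    set β : D.Vq → ℕ := fun a => Module.finrank ℂ (W a) with hβdef
    have hle : ∀ a, β a ≤ D.alphaV a := by
      intro a
      have h1 : Module.finrank ℂ (W a) ≤ Module.finrank ℂ (Fin (D.alphaV a) → ℂ) :=
        Submodule.finrank_le (W a)
      rwa [Module.finrank_fin_fun] at h1
    have hzero : ∑ a, (D.lamV a + D.vbar (fun i => t * D.wfun i) a) * (β a : ℂ) = 0 :=
      sum_scalar_finrank_eq_zero D.quiv D.alphaV x _ hmu W hW
    have hsplit : (∑ a, D.lamV a * (β a : ℂ))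
        + t * ∑ a, D.vbar D.wfun a * (β a : ℂ) = 0 := by
      rw [Finset.mul_sum, ← Finset.sum_add_distrib, ← hzero]
      refine Finset.sum_congr rfl (fun a _ => ?_)
      rw [D.vbar_smul t D.wfun a]
      ring
    exact ht β hle hβ hsplit
  · rintro ⟨hI, hdet⟩
    exact ⟨fun W hW _ => hI W hW, hdet⟩
end
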